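/- arXiv:math/0209020 — 2 statements merged into one kernel-verified Lean document; each statement's English description precedes it below -/
import Mathlib

section
/- Let λ be a minimal root and s ∈ B. Then exactly one of the following three options holds: (i) λ = α_s (in which case ρ(s) λ = −α_s is a negative root); (ii) ρ(s) λ is a minimal root; (iii) ρ(s) λ is a positive root, different from α_s, which dominates α_s (in particular ρ(s) λ is not minimal). -/
open Real

variable {B : Type*}

/-- The pairing constant `⟨α_s, α_t⟩` of the standard bilinear form:
`-cos (π / M s t)` if `M s t ≠ 0`, and `-1` if `M s t = 0` (i.e. `m_{s,t} = ∞`). -/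
noncomputable def pairing (M : CoxeterMatrix B) (s t : B) : ℝ :=
  if M s t = 0 then -1 else -Real.cos (Real.pi / (M s t : ℝ))

/-- The standard symmetric bilinear form on `V = B → ℝ`. -/
noncomputable def form [Fintype B] (M : CoxeterMatrix B) (v w : B → ℝ) : ℝ :=
  ∑ s, ∑ t, v s * w t * pairing M s t

/-- The simple root `α_s`, i.e. the standard basis vector at `s`. -/
noncomputable def sroot [DecidableEq B] (s : B) : B → ℝ := Pi.single s 1

/-- `λ` is a root: `λ = ρ(w) α_s` for some `w ∈ W`, `s ∈ B`. -/
def IsRoot [DecidableEq B] (M : CoxeterMatrix B)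
    (ρ : M.Group →* Module.End ℝ (B → ℝ)) (lam : B → ℝ) : Prop :=
  ∃ (w : M.Group) (s : B), ρ w (sroot s) = lam

/-- `λ` is positive: all coordinates are nonnegative. -/
def IsPos (lam : B → ℝ) : Prop := ∀ s, 0 ≤ lam s

/-- `λ` is negative: all coordinates are nonpositive. -/
def IsNeg (lam : B → ℝ) : Prop := ∀ s, lam s ≤ 0

/-- `λ` is a positive root. -/
def IsPosRoot [DecidableEq B] (M : CoxeterMatrix B)
    (ρ : M.Group →* Module.End ℝ (B → ℝ)) (lam : B → ℝ) : Prop :=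
  IsRoot M ρ lam ∧ IsPos lam

/-- `λ` dominates `μ`: for every `w ∈ W`, if `ρ(w) μ` is positive then so is `ρ(w) λ`. -/
def Dominates (M : CoxeterMatrix B)
    (ρ : M.Group →* Module.End ℝ (B → ℝ)) (lam mu : B → ℝ) : Prop :=
  ∀ w : M.Group, IsPos (ρ w mu) → IsPos (ρ w lam)

/-- `λ` is a minimal root: a positive root dominating no positive root other than itself. -/
def IsMinimal [DecidableEq B] (M : CoxeterMatrix B)
    (ρ : M.Group →* Module.End ℝ (B → ℝ)) (lam : B → ℝ) : Prop :=
  IsPosRoot M ρ lam ∧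
    ∀ mu, IsPosRoot M ρ mu → Dominates M ρ lam mu → mu = lam

/-- The depth `δ(λ)` of a positive root:
the least Coxeter length of a `w ∈ W` with `ρ(w⁻¹) λ` negative. -/
noncomputable def depth (M : CoxeterMatrix B)
    (ρ : M.Group →* Module.End ℝ (B → ℝ)) (lam : B → ℝ) : ℕ :=
  sInf {n | ∃ w : M.Group, IsNeg (ρ w⁻¹ lam) ∧ M.toCoxeterSystem.length w = n}

/-- The partial order `λ ⪯ μ` on positive roots:
`μ = ρ(w) λ` for some `w` with `δ(μ) = ℓ(w) + δ(λ)`. -/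
def PLE (M : CoxeterMatrix B)
    (ρ : M.Group →* Module.End ℝ (B → ℝ)) (lam mu : B → ℝ) : Prop :=
  ∃ w : M.Group, mu = ρ w lam ∧
    depth M ρ mu = M.toCoxeterSystem.length w + depth M ρ lam

/-- The Coxeter graph of `M`: distinct `s`, `t` are adjacent iff `M s t ≥ 3` or `M s t = 0`. -/
def coxGraph (M : CoxeterMatrix B) : SimpleGraph B where
  Adj s t := s ≠ t ∧ (M s t = 0 ∨ 3 ≤ M s t)
  symm := by
    constructor
    intro s t h
    exact ⟨h.1.symm, by rw [M.symmetric t s]; exact h.2⟩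
  loopless := by constructor; intro s h; exact h.1 rfl

/-- The support of a vector `λ ∈ V`. -/
def supp (lam : B → ℝ) : Set B := {s | lam s ≠ 0}

/-- `ExactlyOne p q r` means exactly one of the three propositions holds. -/
def ExactlyOne (p q r : Prop) : Prop :=
  (p ∧ ¬q ∧ ¬r) ∨ (¬p ∧ q ∧ ¬r) ∨ (¬p ∧ ¬q ∧ r)


/-! ### Auxiliary development: the standard geometric representation -/

set_option linter.unusedSectionVars false

noncomputable def altCoef (m k : ℕ) : ℝ :=
  if m = 0 then (k : ℝ) else Real.sin (k * (Real.pi / m)) / Real.sin (Real.pi / m)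

noncomputable def gam (m : ℕ) : ℝ := if m = 0 then 1 else Real.cos (Real.pi / m)

lemma sin_theta_pos {m : ℕ} (h0 : m ≠ 0) (h1 : m ≠ 1) : 0 < Real.sin (Real.pi / m) := by
  have hm : (2 : ℝ) ≤ (m : ℝ) := by
    have : 2 ≤ m := by omega
    exact_mod_cast this
  apply Real.sin_pos_of_pos_of_lt_pi
  · positivity
  · have h2 : Real.pi / m ≤ Real.pi / 2 :=
      div_le_div_of_nonneg_left Real.pi_pos.le (by norm_num) hm
    linarith [Real.pi_pos]

lemma altCoef_zero (m : ℕ) : altCoef m 0 = 0 := by simp [altCoef]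

lemma altCoef_one {m : ℕ} (h1 : m ≠ 1) : altCoef m 1 = 1 := by
  rcases eq_or_ne m 0 with h0 | h0
  · simp [altCoef, h0]
  · rw [altCoef, if_neg h0]
    simp only [Nat.cast_one, one_mul]
    rw [div_self (sin_theta_pos h0 h1).ne']

lemma altCoef_rec {m : ℕ} (h1 : m ≠ 1) (k : ℕ) :
    altCoef m (k + 2) = 2 * gam m * altCoef m (k + 1) - altCoef m k := by
  rcases eq_or_ne m 0 with h0 | h0
  · simp [altCoef, gam, h0]; push_cast; ring
  · rw [altCoef, altCoef, altCoef, gam, if_neg h0, if_neg h0, if_neg h0, if_neg h0]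
    have hs := (sin_theta_pos h0 h1).ne'
    set θ := Real.pi / m
    have e1 : ((k : ℝ) + 2) * θ = ((k + 1 : ℝ) * θ) + θ := by ring
    have e2 : (k : ℝ) * θ = ((k + 1 : ℝ) * θ) - θ := by ring
    push_cast
    rw [e1, e2, Real.sin_add, Real.sin_sub]
    field_simp
    ring

lemma altCoef_nonneg {m : ℕ} (h1 : m ≠ 1) {k : ℕ} (h : m = 0 ∨ k ≤ m) :
    0 ≤ altCoef m k := by
  rcases eq_or_ne m 0 with h0 | h0
  · simp [altCoef, h0]
  · rw [altCoef, if_neg h0]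
    apply div_nonneg _ (sin_theta_pos h0 h1).le
    apply Real.sin_nonneg_of_nonneg_of_le_pi
    · positivity
    · have h' : k ≤ m := by by_contra hc; rcases h with h | h; exact h0 h; exact hc h
      have : (k : ℝ) * (Real.pi / m) ≤ (m : ℝ) * (Real.pi / m) :=
        mul_le_mul_of_nonneg_right (by exact_mod_cast h') (by positivity)
      have hm : (m : ℝ) ≠ 0 := Nat.cast_ne_zero.mpr h0
      calc (k : ℝ) * (Real.pi / m) ≤ (m : ℝ) * (Real.pi / m) := this
        _ = Real.pi := by field_simp

lemma alt_shape [DecidableEq B] (ω : List B) : ∀ i i' : B,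
    (∀ x ∈ ω, x = i ∨ x = i') → ω.Chain' (· ≠ ·) → ω.getLast? = some i' →
    ω = CoxeterSystem.alternatingWord i i' ω.length := by
  induction ω using List.reverseRecOn with
  | nil => intro i i' _ _ h; simp at h
  | append_singleton l x ih =>
      intro i i' hmem hchain hlast
      have hgl : (l ++ [x]).getLast? = some x := by
        rw [List.getLast?_eq_getLast (l := l ++ [x]) (by simp)]
        simp
      have hx : x = i' := by
        rw [hgl] at hlast
        exact Option.some.inj hlast
      rcases List.isChain_append.mp hchain with ⟨hl, -, hrel⟩
      rcases eq_or_ne l [] with rfl | hne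
      · rw [hx]
        simp [CoxeterSystem.alternatingWord_succ, CoxeterSystem.alternatingWord]
      · have hlastl : l.getLast? = some i := by
          have hmem' : l.getLast hne = i ∨ l.getLast hne = i' :=
            hmem _ (List.mem_append_left _ (List.getLast_mem hne))
          have hne' : l.getLast hne ≠ i' := by
            have := hrel (l.getLast hne) (List.getLast?_eq_getLast hne) x rfl
            rw [hx] at this
            exact this
          rw [List.getLast?_eq_getLast hne]
          rcases hmem' with h | h
          · rw [h]
          · exact absurd h hne'
        have hl' : l = CoxeterSystem.alternatingWord i' i l.length := by
          apply ih i' i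
          · intro y hy; exact (hmem y (List.mem_append_left _ hy)).symm
          · exact hl
          · exact hlastl
        rw [List.length_append, List.length_singleton,
          CoxeterSystem.alternatingWord_succ, List.concat_eq_append, ← hl', hx]

lemma chain'_of_isReduced {W : Type*} [Group W] {M : CoxeterMatrix B}
    (cs : CoxeterSystem M W) : ∀ ω : List B, cs.IsReduced ω → ω.Chain' (· ≠ ·) := by
  intro ω
  induction ω with
  | nil => intro; exact List.isChain_nil
  | cons x l ih =>
      intro hred
      have hl : cs.IsReduced l := by
        have := hred.drop 1
        simpa using this
      simp only [List.Chain', List.isChain_cons]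
      refine ⟨?_, ih hl⟩
      intro y hy
      cases l with
      | nil => simp at hy
      | cons z l' =>
          have hz : z = y := by simpa using hy
          subst hz
          intro hxy
          subst hxy
          unfold CoxeterSystem.IsReduced at hred
          rw [cs.wordProd_cons, cs.wordProd_cons, cs.simple_mul_simple_cancel_left] at hred
          have := cs.length_wordProd_le l'
          rw [hred] at this
          simp at this

lemma decomp {M : CoxeterMatrix B} (i t : B) : ∀ (n : ℕ) (w : M.Group),
    M.toCoxeterSystem.length w = n →
    ∃ (v : M.Group) (ω : List B), (∀ x ∈ ω, x = i ∨ x = t) ∧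
      w = v * M.toCoxeterSystem.wordProd ω ∧
      M.toCoxeterSystem.length w = M.toCoxeterSystem.length v + ω.length ∧
      ¬M.toCoxeterSystem.IsRightDescent v i ∧ ¬M.toCoxeterSystem.IsRightDescent v t := by
  set cs := M.toCoxeterSystem with hcs
  intro n
  induction n using Nat.strong_induction_on with
  | _ n ih =>
      intro w hw
      have key : ∀ x : B, (x = i ∨ x = t) → cs.IsRightDescent w x →
          ∃ (v : M.Group) (ω : List B), (∀ y ∈ ω, y = i ∨ y = t) ∧
            w = v * cs.wordProd ω ∧ cs.length w = cs.length v + ω.length ∧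
            ¬cs.IsRightDescent v i ∧ ¬cs.IsRightDescent v t := by
        intro x hx hdes
        have hlen : cs.length (w * cs.simple x) + 1 = cs.length w :=
          cs.isRightDescent_iff.mp hdes
        obtain ⟨v, ω', hmem, heq, hl, hvi, hvt⟩ :=
          ih (cs.length (w * cs.simple x)) (by omega) (w * cs.simple x) rfl
        refine ⟨v, ω' ++ [x], ?_, ?_, ?_, hvi, hvt⟩
        · intro y hy
          rcases List.mem_append.mp hy with h | h
          · exact hmem y h
          · simp at h; subst h; exact hx
        · rw [cs.wordProd_append, cs.wordProd_singleton, ← mul_assoc, ← heq,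
            cs.simple_mul_simple_cancel_right]
        · rw [List.length_append, List.length_singleton]
          omega
      by_cases h1 : cs.IsRightDescent w i
      · exact key i (Or.inl rfl) h1
      by_cases h2 : cs.IsRightDescent w t
      · exact key t (Or.inr rfl) h2
      · exact ⟨w, [], by simp, by simp, by simp, h1, h2⟩

section Aux
variable [DecidableEq B] [Fintype B] (M : CoxeterMatrix B)
  (ρ : M.Group →* Module.End ℝ (B → ℝ))
  (hρ : ∀ (s : B) (v : B → ℝ),
      ρ (M.simple s) v = v - (2 * form M v (sroot s)) • sroot s)

lemma pairing_self (s : B) : pairing M s s = 1 := by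
  simp [pairing, M.diagonal s]

lemma pairing_comm (s t : B) : pairing M s t = pairing M t s := by
  rw [pairing, pairing, M.symmetric s t]

lemma form_single (v : B → ℝ) (t : B) :
    form M v (sroot t) = ∑ u, v u * pairing M u t := by
  unfold form sroot
  refine Finset.sum_congr rfl fun u _ => ?_
  rw [Finset.sum_eq_single t]
  · simp
  · intro b _ hb; simp [Pi.single_apply, hb]
  · simp

lemma form_single_single (u t : B) : form M (sroot u) (sroot t) = pairing M u t := by
  rw [form_single]
  rw [Finset.sum_eq_single u]
  · simp [sroot]
  · intro b _ hb; simp [sroot, Pi.single_apply, hb]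
  · simp

lemma form_self_single (t : B) : form M (sroot t) (sroot t) = 1 := by
  rw [form_single_single, pairing_self]

lemma form_sub_left (v w z : B → ℝ) : form M (v - w) z = form M v z - form M w z := by
  unfold form
  rw [← Finset.sum_sub_distrib]
  refine Finset.sum_congr rfl fun u _ => ?_
  rw [← Finset.sum_sub_distrib]
  refine Finset.sum_congr rfl fun x _ => ?_
  simp [sub_mul]

lemma form_smul_left (c : ℝ) (v z : B → ℝ) : form M (c • v) z = c * form M v z := by
  unfold form
  rw [Finset.mul_sum]
  refine Finset.sum_congr rfl fun u _ => ?_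
  rw [Finset.mul_sum]
  refine Finset.sum_congr rfl fun x _ => ?_
  simp; ring

lemma form_comm (v w : B → ℝ) : form M v w = form M w v := by
  unfold form
  rw [Finset.sum_comm]
  refine Finset.sum_congr rfl fun u _ => ?_
  refine Finset.sum_congr rfl fun x _ => ?_
  rw [pairing_comm]; ring

lemma form_sub_right (v w z : B → ℝ) : form M z (v - w) = form M z v - form M z w := by
  rw [form_comm, form_sub_left, form_comm M v, form_comm M w]

lemma form_smul_right (c : ℝ) (v z : B → ℝ) : form M z (c • v) = c * form M z v := by
  rw [form_comm, form_smul_left, form_comm]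


lemma pairing_eq_gam (s t : B) : pairing M s t = -gam (M s t) := by
  rw [pairing, gam]
  split <;> simp


lemma sroot_nonneg (i : B) : IsPos (sroot i) := by
  intro u
  rw [sroot, Pi.single_apply]
  split <;> norm_num


include hρ

lemma rho_simple_self (i : B) : ρ (M.simple i) (sroot i) = -(sroot i) := by
  rw [hρ, form_self_single]
  funext u
  simp [sub_smul, two_smul]

lemma rho_simple_apply_ne {i u : B} (h : u ≠ i) (v : B → ℝ) :
    ρ (M.simple i) v u = v u := by
  rw [hρ]
  simp [sroot, Pi.single_apply, h]

lemma rho_simple_sq (i : B) (v : B → ℝ) :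
    ρ (M.simple i) (ρ (M.simple i) v) = v := by
  have h : M.simple i * M.simple i = 1 := M.toCoxeterSystem.simple_mul_simple_self i
  have := congrArg (fun g => ρ g v) h
  simpa [map_mul, Module.End.mul_apply] using this

lemma form_rho_invariant (w : M.Group) :
    ∀ (v v' : B → ℝ), form M (ρ w v) (ρ w v') = form M v v' := by
  induction w using M.toCoxeterSystem.simple_induction with
  | simple i =>
      intro v v'
      rw [CoxeterMatrix.toCoxeterSystem_simple]
      rw [hρ, hρ]
      simp only [form_sub_left, form_sub_right, form_smul_left, form_smul_right,
        form_self_single]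
      rw [form_comm M (sroot i) v']
      ring
  | one => simp
  | mul w w' h1 h2 =>
      intro v v'
      rw [map_mul]
      simp only [Module.End.mul_apply]
      rw [h1, h2]

lemma rho_cross (s t : B) :
    ρ (M.simple t) (sroot s) = sroot s + (2 * gam (M s t)) • sroot t := by
  rw [hρ, form_single_single, pairing_eq_gam]
  funext u
  simp [sub_smul]


lemma rho_alt (s t : B) (hst : s ≠ t) (k : ℕ) :
    ρ (M.toCoxeterSystem.wordProd (CoxeterSystem.alternatingWord s t k)) (sroot s)
      = (if Even k then altCoef (M s t) (k+1) else altCoef (M s t) k) • sroot s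
        + (if Even k then altCoef (M s t) k else altCoef (M s t) (k+1)) • sroot t := by
  have h1 : M s t ≠ 1 := M.off_diagonal s t hst
  induction k with
  | zero =>
      simp [CoxeterSystem.alternatingWord, altCoef_zero, altCoef_one h1]
  | succ k ih =>
      rw [CoxeterSystem.alternatingWord_succ', M.toCoxeterSystem.wordProd_cons, map_mul,
        Module.End.mul_apply, ih]
      have hrec := altCoef_rec h1 k
      rcases Nat.even_or_odd k with he | ho
      · have hne : ¬ Even (k+1) := by simp [Nat.even_add_one, he]
        rw [if_pos he, if_pos he, if_neg hne, if_neg hne, if_pos he,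
          CoxeterMatrix.toCoxeterSystem_simple, map_add, map_smul, map_smul,
          rho_cross M ρ hρ s t, rho_simple_self M ρ hρ t]
        funext u
        simp only [Pi.add_apply, Pi.smul_apply, Pi.neg_apply, smul_eq_mul]
        rw [hrec]
        ring
      · have he : ¬ Even k := Nat.not_even_iff_odd.mpr ho
        have hne : Even (k+1) := Nat.even_add_one.mpr he
        rw [if_neg he, if_neg he, if_pos hne, if_pos hne, if_neg he,
          CoxeterMatrix.toCoxeterSystem_simple, map_add, map_smul, map_smul,
          rho_cross M ρ hρ t s, rho_simple_self M ρ hρ s]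
        rw [M.symmetric t s]
        funext u
        simp only [Pi.add_apply, Pi.smul_apply, Pi.neg_apply, smul_eq_mul]
        rw [hrec]
        ring

lemma rho_pos_of_not_descent : ∀ (n : ℕ) (w : M.Group) (i : B),
    M.toCoxeterSystem.length w = n → ¬M.toCoxeterSystem.IsRightDescent w i →
    IsPos (ρ w (sroot i)) := by
  set cs := M.toCoxeterSystem with hcs
  intro n
  induction n using Nat.strong_induction_on with
  | _ n ih =>
      intro w i hw hdes
      rcases eq_or_ne w 1 with rfl | hne
      · simpa using sroot_nonneg i
      obtain ⟨t, ht⟩ := cs.exists_rightDescent_of_ne_one hne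
      have hti : i ≠ t := by rintro rfl; exact hdes ht
      obtain ⟨v, ω, hmem, heq, hlen, hvi, hvt⟩ := decomp i t n w hw
      rw [← hcs] at hlen hvi hvt
      have hωne : ω ≠ [] := by
        rintro rfl
        rw [cs.wordProd_nil, mul_one] at heq
        rw [heq] at ht
        exact hvt ht
      have hk1 : 1 ≤ ω.length := by
        cases ω with
        | nil => exact absurd rfl hωne
        | cons a l => simp
      have hlv : cs.length v < n := by omega
      have posvi : IsPos (ρ v (sroot i)) := ih (cs.length v) (by omega) v i rfl hvi
      have posvt : IsPos (ρ v (sroot t)) := ih (cs.length v) (by omega) v t rfl hvt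
      set u := cs.wordProd ω with hu
      set k := ω.length with hk
      -- length computations
      have h1 : cs.length (w * cs.simple i) = cs.length w + 1 :=
        cs.not_isRightDescent_iff.mp hdes
      have h2 : cs.length (w * cs.simple i) ≤ cs.length v + cs.length (u * cs.simple i) := by
        rw [heq, mul_assoc]
        exact cs.length_mul_le v (u * cs.simple i)
      have h3 : cs.length (u * cs.simple i) ≤ k + 1 := by
        calc cs.length (u * cs.simple i) ≤ cs.length u + cs.length (cs.simple i) :=
              cs.length_mul_le u (cs.simple i)
          _ ≤ k + 1 := by
              have := cs.length_wordProd_le ω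
              rw [← hu] at this
              rw [cs.length_simple]
              omega
      have h4 : cs.length (u * cs.simple i) = k + 1 := by omega
      have hred : cs.IsReduced (ω ++ [i]) := by
        unfold CoxeterSystem.IsReduced
        rw [cs.wordProd_append, cs.wordProd_singleton, List.length_append,
          List.length_singleton, h4]
      -- shape
      have hshape : ω ++ [i] = CoxeterSystem.alternatingWord t i (k + 1) := by
        have := alt_shape (ω ++ [i]) t i ?_ (chain'_of_isReduced cs _ hred) ?_
        · rwa [List.length_append, List.length_singleton] at this
        · intro x hx
          rcases List.mem_append.mp hx with h | h
          · rcases hmem x h with h' | h'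
            · exact Or.inr h'
            · exact Or.inl h'
          · simp at h; exact Or.inr h
        · rw [List.getLast?_eq_getLast (l := ω ++ [i]) (by simp)]
          simp
      have hωeq : ω = CoxeterSystem.alternatingWord i t k := by
        have : ω ++ [i] = CoxeterSystem.alternatingWord i t k ++ [i] := by
          rw [hshape, CoxeterSystem.alternatingWord_succ, List.concat_eq_append]
        exact List.append_cancel_right this
      -- bound
      have hbound : M i t = 0 ∨ k + 1 ≤ M i t := by
        by_contra hc
        push_neg at hc
        obtain ⟨h0, hlt⟩ := hc
        have h0' : M t i ≠ 0 := by rwa [M.symmetric t i]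
        have hlt' : k + 1 > M t i := by rw [M.symmetric t i]; omega
        exact cs.not_isReduced_alternatingWord t i h0' hlt' (hshape ▸ hred)
      have hm1 : M i t ≠ 1 := M.off_diagonal i t hti
      -- rank 2 values
      have halt := rho_alt M ρ hρ i t hti k
      rw [← hωeq] at halt
      set a := if Even k then altCoef (M i t) (k+1) else altCoef (M i t) k with ha
      set b := if Even k then altCoef (M i t) k else altCoef (M i t) (k+1) with hb
      have h5 : 0 ≤ altCoef (M i t) k := by
        apply altCoef_nonneg hm1
        rcases hbound with h | h
        · exact Or.inl h
        · right; omega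
      have h6 : 0 ≤ altCoef (M i t) (k+1) := by
        apply altCoef_nonneg hm1
        rcases hbound with h | h
        · exact Or.inl h
        · right; omega
      have hanb : 0 ≤ a ∧ 0 ≤ b := by
        rw [ha, hb]
        constructor <;> (split <;> assumption)
      have hfin : ρ w (sroot i) = a • (ρ v (sroot i)) + b • (ρ v (sroot t)) := by
        rw [heq, map_mul, Module.End.mul_apply, halt, map_add, map_smul, map_smul]
      rw [hfin]
      intro c
      simp only [Pi.add_apply, Pi.smul_apply, smul_eq_mul]
      have := posvi c
      have := posvt c
      nlinarith [hanb.1, hanb.2]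

lemma root_pos_or_neg {lam : B → ℝ} (h : IsRoot M ρ lam) : IsPos lam ∨ IsNeg lam := by
  obtain ⟨w, i, rfl⟩ := h
  set cs := M.toCoxeterSystem with hcs
  by_cases hdes : cs.IsRightDescent w i
  · right
    have hkey : ¬cs.IsRightDescent (w * cs.simple i) i :=
      cs.isRightDescent_iff_not_isRightDescent_mul.mp hdes
    have pos : IsPos (ρ (w * cs.simple i) (sroot i)) :=
      rho_pos_of_not_descent M ρ hρ (cs.length (w * cs.simple i)) (w * cs.simple i) i rfl hkey
    have e : w = (w * cs.simple i) * cs.simple i := by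
      rw [cs.simple_mul_simple_cancel_right]
    rw [e, map_mul, Module.End.mul_apply]
    have hsimp : (cs.simple i : M.Group) = M.simple i := by
      rw [hcs, CoxeterMatrix.toCoxeterSystem_simple]
    rw [hsimp] at pos
    rw [hsimp, rho_simple_self M ρ hρ, map_neg]
    intro u
    rw [Pi.neg_apply]
    linarith [pos u]
  · left
    exact rho_pos_of_not_descent M ρ hρ (cs.length w) w i rfl hdes

lemma root_norm {lam : B → ℝ} (h : IsRoot M ρ lam) : form M lam lam = 1 := by
  obtain ⟨w, i, rfl⟩ := h
  rw [form_rho_invariant M ρ hρ, form_self_single]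

lemma eq_sroot_of_offdiag_zero {lam : B → ℝ} (hroot : IsRoot M ρ lam) (hpos : IsPos lam)
    (s : B) (hz : ∀ u, u ≠ s → lam u = 0) : lam = sroot s := by
  have hsc : lam = lam s • sroot s := by
    funext u
    by_cases hu : u = s
    · subst hu; simp [sroot]
    · rw [hz u hu]; simp [sroot, Pi.single_apply, hu]
  have hnorm : form M lam lam = 1 := root_norm M ρ hρ hroot
  rw [hsc, form_smul_left, form_smul_right, form_self_single] at hnorm
  have h1 : lam s * lam s = 1 := by linarith [hnorm]
  have h2 : 0 ≤ lam s := hpos s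
  have h3 : lam s = 1 := by nlinarith
  rw [hsc, h3, one_smul]

/-- if `ν` is a positive root and `ρ(s)ν` is not positive, then `ν = α_s`. -/
lemma key_lemma {nu : B → ℝ} (hroot : IsRoot M ρ nu) (hpos : IsPos nu) (s : B)
    (hnp : ¬ IsPos (ρ (M.simple s) nu)) : nu = sroot s := by
  have hroot' : IsRoot M ρ (ρ (M.simple s) nu) := by
    obtain ⟨w, i, rfl⟩ := hroot
    exact ⟨M.simple s * w, i, by rw [map_mul, Module.End.mul_apply]⟩
  have hneg : IsNeg (ρ (M.simple s) nu) :=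
    (root_pos_or_neg M ρ hρ hroot').resolve_left hnp
  have hz : ∀ u, u ≠ s → nu u = 0 := by
    intro u hu
    have h1 : ρ (M.simple s) nu u = nu u := rho_simple_apply_ne M ρ hρ hu nu
    have h2 := hneg u
    rw [h1] at h2
    linarith [hpos u]
  exact eq_sroot_of_offdiag_zero M ρ hρ hroot hpos s hz

lemma dominates_conj {mu nu : B → ℝ} (h : Dominates M ρ mu nu) (g : M.Group) :
    Dominates M ρ (ρ g mu) (ρ g nu) := by
  intro w hw
  have e : ∀ x, ρ w (ρ g x) = ρ (w * g) x := by
    intro x; rw [map_mul, Module.End.mul_apply]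
  rw [e] at hw ⊢
  exact h (w * g) hw


end Aux

theorem statement3 [DecidableEq B] [Fintype B] (M : CoxeterMatrix B)
    (ρ : M.Group →* Module.End ℝ (B → ℝ))
    (hρ : ∀ (s : B) (v : B → ℝ),
      ρ (M.simple s) v = v - (2 * form M v (sroot s)) • sroot s)
    (lam : B → ℝ) (hlam : IsMinimal M ρ lam) (s : B) :
    ExactlyOne
      (lam = sroot s ∧ ρ (M.simple s) lam = -(sroot s) ∧ IsNeg (ρ (M.simple s) lam))
      (IsMinimal M ρ (ρ (M.simple s) lam))
      (IsPosRoot M ρ (ρ (M.simple s) lam) ∧ ρ (M.simple s) lam ≠ sroot s ∧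
        Dominates M ρ (ρ (M.simple s) lam) (sroot s) ∧
        ¬ IsMinimal M ρ (ρ (M.simple s) lam)) := by
  classical
  obtain ⟨⟨hroot, hpos⟩, hmin⟩ := hlam
  by_cases hls : lam = sroot s
  · left
    have hrs : ρ (M.simple s) lam = -(sroot s) := by
      rw [hls]; exact rho_simple_self M ρ hρ s
    have hnotpos : ¬ IsPos (ρ (M.simple s) lam) := by
      rw [hrs]
      intro hp
      have := hp s
      simp [sroot] at this
      linarith
    refine ⟨⟨hls, hrs, ?_⟩, ?_, ?_⟩
    · intro u
      rw [hrs, Pi.neg_apply]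
      have : (0:ℝ) ≤ sroot s u := by
        rw [sroot, Pi.single_apply]; split <;> norm_num
      linarith
    · intro hq; exact hnotpos hq.1.2
    · intro hr; exact hnotpos hr.1.2
  · set mu := ρ (M.simple s) lam with hmu
    have hmuroot : IsRoot M ρ mu := by
      obtain ⟨w, i, h⟩ := hroot
      exact ⟨M.simple s * w, i, by rw [map_mul, Module.End.mul_apply, h]⟩
    have hmupos : IsPos mu := by
      by_contra hnp
      exact hls (key_lemma M ρ hρ hroot hpos s hnp)
    have hmuposroot : IsPosRoot M ρ mu := ⟨hmuroot, hmupos⟩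
    have hmunes : mu ≠ sroot s := by
      intro h
      have h2 : lam = ρ (M.simple s) (sroot s) := by
        rw [← h, hmu, rho_simple_sq M ρ hρ]
      rw [rho_simple_self M ρ hρ] at h2
      have h3 := hpos s
      rw [h2, Pi.neg_apply] at h3
      rw [sroot, Pi.single_eq_same] at h3
      linarith
    by_cases hq : IsMinimal M ρ mu
    · right; left
      exact ⟨fun h => hls h.1, hq, fun h => h.2.2.2 hq⟩
    · right; right
      refine ⟨fun h => hls h.1, hq, hmuposroot, hmunes, ?_, hq⟩
      have hex : ∃ nu, IsPosRoot M ρ nu ∧ Dominates M ρ mu nu ∧ nu ≠ mu := by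
        unfold IsMinimal at hq
        push_neg at hq
        obtain ⟨nu, h1, h2, h3⟩ := hq hmuposroot
        exact ⟨nu, h1, h2, h3⟩
      obtain ⟨nu, hnuposroot, hdom, hnune⟩ := hex
      have hdom' : Dominates M ρ (ρ (M.simple s) mu) (ρ (M.simple s) nu) :=
        dominates_conj M ρ hρ hdom (M.simple s)
      have hlmu : ρ (M.simple s) mu = lam := by rw [hmu, rho_simple_sq M ρ hρ]
      rw [hlmu] at hdom'
      by_cases hsp : IsPos (ρ (M.simple s) nu)
      · exfalso
        have hroot' : IsRoot M ρ (ρ (M.simple s) nu) := by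
          obtain ⟨w, i, h⟩ := hnuposroot.1
          exact ⟨M.simple s * w, i, by rw [map_mul, Module.End.mul_apply, h]⟩
        have heq1 : ρ (M.simple s) nu = lam := hmin _ ⟨hroot', hsp⟩ hdom'
        have heq2 : nu = mu := by
          rw [← rho_simple_sq M ρ hρ s nu, heq1, hmu]
        exact hnune heq2
      · have hnus : nu = sroot s := key_lemma M ρ hρ hnuposroot.1 hnuposroot.2 s hsp
        rw [← hnus]
        exact hdom
end

section
/- Let λ and μ be minimal roots with λ ⪯ μ, and let s ∈ B. If ρ(s) λ is a positive root that is not minimal, then ρ(s) μ is a positive root that is not minimal. -/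
open Real

variable {B : Type*}

set_option linter.unusedSectionVars false

namespace Stmt8

open CoxeterSystem List

variable [DecidableEq B] [Fintype B] {M : CoxeterMatrix B}
  {ρ : M.Group →* Module.End ℝ (B → ℝ)}

local prefix:100 "σ" => CoxeterMatrix.simple M
local prefix:100 "ℓ" => CoxeterSystem.length (CoxeterMatrix.toCoxeterSystem M)


/-! ### Form basics -/

lemma pairing_symm (s t : B) : pairing M s t = pairing M t s := by
  unfold pairing; rw [M.symmetric t s]

lemma pairing_self (s : B) : pairing M s s = 1 := by
  unfold pairing
  rw [if_neg (by simp [M.diagonal s])]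
  simp [M.diagonal s, Real.cos_pi]

lemma pairing_nonpos {s t : B} (h : s ≠ t) : pairing M s t ≤ 0 := by
  unfold pairing
  split
  · norm_num
  · rename_i h0
    have h2 : 2 ≤ M s t := by
      have h1 := M.off_diagonal s t h
      omega
    have hle : Real.pi / (M s t : ℝ) ≤ Real.pi / 2 := by
      apply div_le_div_of_nonneg_left Real.pi_pos.le (by norm_num)
      exact_mod_cast h2
    have hge : -(Real.pi/2) ≤ Real.pi / (M s t : ℝ) := by
      have h3 : (0:ℝ) < (M s t : ℝ) := by exact_mod_cast Nat.pos_of_ne_zero (by omega)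
      have h4 := Real.pi_pos
      have h5 : 0 ≤ Real.pi / (M s t : ℝ) := by positivity
      linarith
    have : 0 ≤ Real.cos (Real.pi / (M s t : ℝ)) :=
      Real.cos_nonneg_of_mem_Icc ⟨hge, hle⟩
    linarith

lemma neg_one_le_pairing (s t : B) : -1 ≤ pairing M s t := by
  unfold pairing
  split
  · exact le_refl _
  · have := Real.neg_one_le_cos (Real.pi / (M s t : ℝ))
    have := Real.cos_le_one (Real.pi / (M s t : ℝ))
    linarith

lemma form_symm (v w : B → ℝ) : form M v w = form M w v := by
  unfold form
  rw [Finset.sum_comm]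
  congr 1; ext s; congr 1; ext t
  rw [pairing_symm]; ring

lemma form_add_left (u v w : B → ℝ) : form M (u + v) w = form M u w + form M v w := by
  unfold form
  rw [← Finset.sum_add_distrib]
  congr 1; ext s
  rw [← Finset.sum_add_distrib]
  congr 1; ext t
  simp [Pi.add_apply]; ring

lemma form_smul_left (c : ℝ) (v w : B → ℝ) : form M (c • v) w = c * form M v w := by
  unfold form
  rw [Finset.mul_sum]
  congr 1; ext s
  rw [Finset.mul_sum]
  congr 1; ext t
  simp [Pi.smul_apply, smul_eq_mul]; ring

lemma form_neg_left (v w : B → ℝ) : form M (-v) w = -form M v w := by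
  have := form_smul_left (M := M) (-1) v w
  simpa using this

lemma form_neg_right (v w : B → ℝ) : form M v (-w) = -form M v w := by
  rw [form_symm, form_neg_left, form_symm]

lemma form_sub_left (u v w : B → ℝ) : form M (u - v) w = form M u w - form M v w := by
  have h := form_add_left (M := M) u (-v) w
  rw [form_neg_left] at h
  simpa [sub_eq_add_neg] using h

lemma form_add_right (u v w : B → ℝ) : form M u (v + w) = form M u v + form M u w := by
  rw [form_symm, form_add_left, form_symm v u, form_symm w u]

lemma form_smul_right (c : ℝ) (v w : B → ℝ) : form M v (c • w) = c * form M v w := by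
  rw [form_symm, form_smul_left, form_symm]

lemma form_sub_right (u v w : B → ℝ) : form M u (v - w) = form M u v - form M u w := by
  rw [form_symm, form_sub_left, form_symm v u, form_symm w u]

lemma form_sroot_sroot (s t : B) : form M (sroot s) (sroot t) = pairing M s t := by
  unfold form sroot
  rw [Finset.sum_eq_single s]
  · rw [Finset.sum_eq_single t]
    · simp
    · intro b _ hb; simp [Pi.single_apply, hb]
    · intro h; exact absurd (Finset.mem_univ t) h
  · intro b _ hb
    simp [Pi.single_apply, hb]
  · intro h; exact absurd (Finset.mem_univ s) h

lemma form_self_sroot (s : B) : form M (sroot s) (sroot s) = 1 := by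
  rw [form_sroot_sroot, pairing_self]

lemma form_zero_left (w : B → ℝ) : form M 0 w = 0 := by
  have := form_smul_left (M := M) 0 0 w
  simpa using this


/-! ### Representation basics -/

variable (hρ : ∀ (s : B) (v : B → ℝ),
      ρ (M.simple s) v = v - (2 * form M v (sroot s)) • sroot s)

include hρ in
lemma hρ' (s : B) (v : B → ℝ) :
    ρ (σ s) v = v - (2 * form M v (sroot s)) • sroot s := hρ s v

lemma rho_mul_apply (w w' : M.Group) (v : B → ℝ) : ρ (w * w') v = ρ w (ρ w' v) := by
  rw [map_mul]; rfl

lemma rho_one_apply (v : B → ℝ) : ρ (1 : M.Group) v = v := by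
  rw [map_one]; rfl

include hρ in
lemma rho_simple_sroot (s : B) : ρ (σ s) (sroot s) = -sroot s := by
  rw [hρ' hρ, form_self_sroot]
  ext i
  simp [Pi.sub_apply, Pi.smul_apply]
  ring

include hρ in
lemma rho_simple_sq (s : B) (v : B → ℝ) : ρ (σ s) (ρ (σ s) v) = v := by
  rw [← rho_mul_apply]
  have h : σ s * σ s = 1 := by
    have := (CoxeterMatrix.toCoxeterSystem M).simple_mul_simple_self s
    rwa [M.toCoxeterSystem_simple] at this
  rw [h, rho_one_apply]

include hρ in
lemma form_rho_simple (s : B) (v u : B → ℝ) :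
    form M (ρ (σ s) v) (ρ (σ s) u) = form M v u := by
  rw [hρ' hρ s v, hρ' hρ s u]
  rw [form_sub_left, form_sub_right, form_sub_right, form_smul_left, form_smul_right,
    form_smul_left, form_smul_right, form_self_sroot]
  linear_combination (2 * form M v (sroot s)) * form_symm (M := M) u (sroot s)

include hρ in
lemma form_rho_word (ω : List B) (v u : B → ℝ) :
    form M (ρ (M.toCoxeterSystem.wordProd ω) v) (ρ (M.toCoxeterSystem.wordProd ω) u) = form M v u := by
  induction ω generalizing v u with
  | nil => rw [wordProd_nil, rho_one_apply, rho_one_apply]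
  | cons i ω ih =>
    rw [wordProd_cons, M.toCoxeterSystem_simple, rho_mul_apply, rho_mul_apply,
      form_rho_simple hρ, ih]

include hρ in
lemma form_rho (w : M.Group) (v u : B → ℝ) :
    form M (ρ w v) (ρ w u) = form M v u := by
  obtain ⟨ω, rfl⟩ := M.toCoxeterSystem.wordProd_surjective w
  exact form_rho_word hρ ω v u

lemma rho_inv_cancel (w : M.Group) (v : B → ℝ) : ρ w⁻¹ (ρ w v) = v := by
  rw [← rho_mul_apply, inv_mul_cancel, rho_one_apply]

lemma rho_cancel_inv (w : M.Group) (v : B → ℝ) : ρ w (ρ w⁻¹ v) = v := by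
  rw [← rho_mul_apply, mul_inv_cancel, rho_one_apply]

include hρ in
lemma form_rho_right (w : M.Group) (v u : B → ℝ) :
    form M v (ρ w u) = form M (ρ w⁻¹ v) u := by
  conv_lhs => rw [← rho_cancel_inv (ρ := ρ) w v]
  rw [form_rho hρ]

/-! ### Roots -/

lemma isRoot_sroot (s : B) : IsRoot M ρ (sroot s) := ⟨1, s, rho_one_apply _⟩

lemma root_rho {lam : B → ℝ} (h : IsRoot M ρ lam) (w : M.Group) :
    IsRoot M ρ (ρ w lam) := by
  obtain ⟨u, s, rfl⟩ := h
  exact ⟨w * u, s, rho_mul_apply (ρ := ρ) w u _⟩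

include hρ in
lemma root_neg {lam : B → ℝ} (h : IsRoot M ρ lam) : IsRoot M ρ (-lam) := by
  obtain ⟨u, s, rfl⟩ := h
  refine ⟨u * σ s, s, ?_⟩
  rw [rho_mul_apply, rho_simple_sroot hρ]
  simp [map_neg]

include hρ in
lemma root_form_self {lam : B → ℝ} (h : IsRoot M ρ lam) : form M lam lam = 1 := by
  obtain ⟨u, s, rfl⟩ := h
  rw [form_rho hρ, form_self_sroot]

include hρ in
lemma root_ne_zero {lam : B → ℝ} (h : IsRoot M ρ lam) : lam ≠ 0 := by
  intro h0
  have := root_form_self hρ h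
  rw [h0, form_zero_left] at this
  norm_num at this

include hρ in
lemma not_isPos_and_isNeg {lam : B → ℝ} (h : IsRoot M ρ lam) :
    ¬ (IsPos lam ∧ IsNeg lam) := by
  rintro ⟨hp, hn⟩
  apply root_ne_zero hρ h
  ext i
  exact le_antisymm (hn i) (hp i)

lemma isPos_sroot (s : B) : IsPos (sroot s) := by
  intro i
  unfold sroot
  rcases eq_or_ne s i with rfl|h
  · simp
  · simp [Pi.single_apply, h.symm]

lemma isNeg_neg_isPos {v : B → ℝ} (h : IsNeg v) : IsPos (-v) := fun i => by
  simpa using h i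

lemma isPos_neg_isNeg {v : B → ℝ} (h : IsPos v) : IsNeg (-v) := fun i => by
  simpa using h i

lemma rho_neg (w : M.Group) (v : B → ℝ) : ρ w (-v) = -(ρ w v) := map_neg _ _

lemma isNeg_neg_iff {v : B → ℝ} : IsNeg (-v) ↔ IsPos v := by
  constructor
  · intro h i; have := h i; simpa using this
  · intro h i; simpa using h i

lemma isPos_neg_iff {v : B → ℝ} : IsPos (-v) ↔ IsNeg v := by
  constructor
  · intro h i; have := h i; simpa using this
  · intro h i; simpa using h i

/-! ### Positivity of simple-root images (the fundamental theorem) -/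

lemma isPos_comb {a b : ℝ} {v v' : B → ℝ} (ha : 0 ≤ a) (hb : 0 ≤ b)
    (hv : IsPos v) (hv' : IsPos v') : IsPos (a • v + b • v') := by
  intro i
  have := hv i; have := hv' i
  simp only [Pi.add_apply, Pi.smul_apply, smul_eq_mul]
  nlinarith

/-- Coefficient sequence for the dihedral computation. -/
noncomputable def fcoef (M : CoxeterMatrix B) (s t : B) (j : ℕ) : ℝ :=
  if M s t = 0 then j else Real.sin (j * (Real.pi / (M s t : ℝ))) / Real.sin (Real.pi / (M s t : ℝ))

lemma fcoef_zero (s t : B) : fcoef M s t 0 = 0 := by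
  unfold fcoef; split <;> simp

lemma Mst_two {s t : B} (hst : s ≠ t) (h : M s t ≠ 0) : 2 ≤ M s t := by
  have := M.off_diagonal s t hst
  omega

lemma sin_theta_pos {s t : B} (hst : s ≠ t) (h : M s t ≠ 0) :
    0 < Real.sin (Real.pi / (M s t : ℝ)) := by
  have h2 : 2 ≤ M s t := Mst_two hst h
  have hmpos : (0:ℝ) < (M s t : ℝ) := by exact_mod_cast Nat.pos_of_ne_zero h
  have hθpos : 0 < Real.pi / (M s t : ℝ) := div_pos Real.pi_pos hmpos
  have h2' : (2:ℝ) ≤ (M s t : ℝ) := by exact_mod_cast h2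
  have hθlt : Real.pi / (M s t : ℝ) < Real.pi := by
    rw [div_lt_iff₀ hmpos]
    nlinarith [Real.pi_pos]
  exact Real.sin_pos_of_pos_of_lt_pi hθpos hθlt

lemma fcoef_one {s t : B} (hst : s ≠ t) : fcoef M s t 1 = 1 := by
  unfold fcoef
  split
  · norm_num
  · rename_i h
    have := sin_theta_pos (M := M) hst h
    push_cast
    rw [one_mul, div_self (ne_of_gt this)]

lemma fcoef_rec (s t : B) (k : ℕ) :
    fcoef M s t (k+2) = -(2 * pairing M s t) * fcoef M s t (k+1) - fcoef M s t k := by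
  unfold fcoef pairing
  split
  · push_cast; ring
  · rename_i h
    set θ := Real.pi / (M s t : ℝ) with hθ
    have h1 : ((k:ℝ)+2) * θ = ((k:ℝ)+1) * θ + θ := by ring
    have h2 : (k:ℝ) * θ = ((k:ℝ)+1) * θ - θ := by ring
    push_cast
    rw [h1, h2, Real.sin_add, Real.sin_sub]
    ring

lemma fcoef_nonneg {s t : B} (hst : s ≠ t) (j : ℕ) (hj : M s t = 0 ∨ j ≤ M s t) :
    0 ≤ fcoef M s t j := by
  unfold fcoef
  split
  · positivity
  · rename_i h
    have hm : M s t ≠ 0 := h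
    have hj' : j ≤ M s t := by tauto
    have hmpos : (0:ℝ) < (M s t : ℝ) := by exact_mod_cast Nat.pos_of_ne_zero hm
    have hθpos : 0 < Real.pi / (M s t : ℝ) := div_pos Real.pi_pos hmpos
    apply div_nonneg _ (sin_theta_pos (M := M) hst h).le
    apply Real.sin_nonneg_of_nonneg_of_le_pi
    · positivity
    · calc (j:ℝ) * (Real.pi / (M s t : ℝ)) ≤ (M s t : ℝ) * (Real.pi / (M s t : ℝ)) := by
            apply mul_le_mul_of_nonneg_right _ hθpos.le
            exact_mod_cast hj'
          _ = Real.pi := by field_simp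

include hρ in
lemma dih {s t : B} (hst : s ≠ t) (k : ℕ) :
    ρ (M.toCoxeterSystem.wordProd (alternatingWord s t k)) (sroot s) =
      (if Even k then fcoef M s t (k+1) else fcoef M s t k) • sroot s
      + (if Even k then fcoef M s t k else fcoef M s t (k+1)) • sroot t := by
  induction k with
  | zero =>
    simp only [alternatingWord, wordProd_nil, rho_one_apply, if_pos (Even.zero)]
    rw [fcoef_zero, fcoef_one hst]
    ext j; simp
  | succ k ih =>
    rw [alternatingWord_succ', wordProd_cons, M.toCoxeterSystem_simple, rho_mul_apply, ih]
    by_cases hk : Even k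
    · have hk1 : ¬ Even (k+1) := by simp [Nat.even_add_one, hk]
      rw [if_pos hk, if_pos hk, if_neg hk1, if_neg hk1, if_pos hk]
      rw [hρ' hρ]
      rw [form_add_left, form_smul_left, form_smul_left, form_sroot_sroot, form_sroot_sroot,
        pairing_self]
      have hrec := fcoef_rec (M := M) s t k
      ext j
      simp only [Pi.add_apply, Pi.sub_apply, Pi.smul_apply, smul_eq_mul]
      linear_combination (-(sroot t j)) * hrec
    · have hk1 : Even (k+1) := Nat.even_add_one.mpr hk
      rw [if_neg hk, if_neg hk, if_pos hk1, if_pos hk1, if_neg hk]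
      rw [hρ' hρ]
      rw [form_add_left, form_smul_left, form_smul_left, form_sroot_sroot, form_sroot_sroot,
        pairing_self]
      have hrec := fcoef_rec (M := M) s t k
      have hsym := pairing_symm (M := M) t s
      ext j
      simp only [Pi.add_apply, Pi.sub_apply, Pi.smul_apply, smul_eq_mul]
      linear_combination (-(sroot s j)) * hrec + (-2 * fcoef M s t (k+1) * sroot s j) * hsym

lemma length_mul_simple_lt_of_descent {w : M.Group} {i : B}
    (h : M.toCoxeterSystem.IsRightDescent w i) : ℓ (w * σ i) + 1 = ℓ w := by
  unfold CoxeterSystem.IsRightDescent at h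
  rw [M.toCoxeterSystem_simple] at h
  rcases M.toCoxeterSystem.length_mul_simple w i with h'|h' <;>
    rw [M.toCoxeterSystem_simple] at h' <;> omega

lemma length_mul_simple_of_not_descent {w : M.Group} {i : B}
    (h : ¬ M.toCoxeterSystem.IsRightDescent w i) : ℓ (w * σ i) = ℓ w + 1 := by
  unfold CoxeterSystem.IsRightDescent at h
  rw [M.toCoxeterSystem_simple] at h
  rcases M.toCoxeterSystem.length_mul_simple w i with h'|h' <;>
    rw [M.toCoxeterSystem_simple] at h' <;> omega

lemma strip (s t : B) : ∀ n (w : M.Group), ℓ w ≤ n →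
    ∃ (u : M.Group) (ω : List B),
      (∀ i ∈ ω, i = s ∨ i = t) ∧ w = u * M.toCoxeterSystem.wordProd ω ∧
      ℓ w = ℓ u + ω.length ∧
      ¬ M.toCoxeterSystem.IsRightDescent u s ∧ ¬ M.toCoxeterSystem.IsRightDescent u t := by
  intro n
  induction n with
  | zero =>
    intro w hw
    refine ⟨w, [], by simp, by simp [wordProd_nil], by simp, ?_, ?_⟩ <;>
    · intro hd
      unfold CoxeterSystem.IsRightDescent at hd
      omega
  | succ n ih =>
    intro w hw
    by_cases hs : M.toCoxeterSystem.IsRightDescent w s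
    · have hlen := length_mul_simple_lt_of_descent hs
      obtain ⟨u, ω, h1, h2, h3, h4, h5⟩ := ih (w * σ s) (by omega)
      refine ⟨u, ω.concat s, ?_, ?_, ?_, h4, h5⟩
      · intro i hi
        rw [List.concat_eq_append, List.mem_append] at hi
        rcases hi with hi|hi
        · exact h1 i hi
        · left; simpa using hi
      · rw [M.toCoxeterSystem.wordProd_concat, M.toCoxeterSystem_simple, ← mul_assoc, ← h2]
        rw [mul_assoc]
        have : σ s * σ s = 1 := by
          have := M.toCoxeterSystem.simple_mul_simple_self s
          rwa [M.toCoxeterSystem_simple] at this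
        rw [this, mul_one]
      · rw [List.length_concat]
        omega
    · by_cases ht : M.toCoxeterSystem.IsRightDescent w t
      · have hlen := length_mul_simple_lt_of_descent ht
        obtain ⟨u, ω, h1, h2, h3, h4, h5⟩ := ih (w * σ t) (by omega)
        refine ⟨u, ω.concat t, ?_, ?_, ?_, h4, h5⟩
        · intro i hi
          rw [List.concat_eq_append, List.mem_append] at hi
          rcases hi with hi|hi
          · exact h1 i hi
          · right; simpa using hi
        · rw [M.toCoxeterSystem.wordProd_concat, M.toCoxeterSystem_simple, ← mul_assoc, ← h2]
          rw [mul_assoc]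
          have : σ t * σ t = 1 := by
            have := M.toCoxeterSystem.simple_mul_simple_self t
            rwa [M.toCoxeterSystem_simple] at this
          rw [this, mul_one]
        · rw [List.length_concat]
          omega
      · exact ⟨w, [], by simp, by simp [wordProd_nil], by simp, hs, ht⟩

lemma not_reduced_cons_cons (i : B) (rest : List B) :
    ¬ M.toCoxeterSystem.IsReduced (i :: i :: rest) := by
  intro hred
  unfold CoxeterSystem.IsReduced at hred
  rw [M.toCoxeterSystem.wordProd_cons, M.toCoxeterSystem.wordProd_cons,
    M.toCoxeterSystem.simple_mul_simple_cancel_left] at hred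
  have := M.toCoxeterSystem.length_wordProd_le rest
  simp at hred
  omega

lemma alt_extend {s t : B} (i : B) (k : ℕ) (h : i = (if Even k then t else s)) :
    i :: alternatingWord s t k = alternatingWord s t (k+1) := by
  rw [alternatingWord_succ', ← h]

lemma alt_head (s t : B) (k : ℕ) :
    alternatingWord s t (k+1) = (if Even k then t else s) :: alternatingWord s t k :=
  alternatingWord_succ' s t k

lemma alt_aux_s {s t : B} (hst : s ≠ t) (ω : List B)
    (h : ω = alternatingWord s t ω.length)
    (hred : M.toCoxeterSystem.IsReduced (s :: ω)) :
    s :: ω = alternatingWord s t (ω.length + 1) ∨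
      s :: ω = alternatingWord t s (ω.length + 1) := by
  rcases Nat.eq_zero_or_pos ω.length with hk|hk
  · have hω : ω = [] := List.eq_nil_of_length_eq_zero hk
    subst hω
    right; simp [alternatingWord]
  · obtain ⟨k', hk'⟩ : ∃ k', ω.length = k' + 1 := ⟨ω.length - 1, by omega⟩
    by_cases hev : Even ω.length
    · exfalso
      apply not_reduced_cons_cons (M := M) s (alternatingWord s t k')
      have hhead : alternatingWord s t ω.length = s :: alternatingWord s t k' := by
        rw [hk', alt_head]
        congr 1
        have : ¬ Even k' := by
          rw [hk'] at hev
          simpa [Nat.even_add_one] using hev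
        rw [if_neg this]
      rw [h, hhead] at hred
      exact hred
    · left
      conv_lhs => rw [h]
      exact alt_extend (s := s) (t := t) s ω.length (by rw [if_neg hev])

lemma alt_aux_t {s t : B} (hst : s ≠ t) (ω : List B)
    (h : ω = alternatingWord s t ω.length)
    (hred : M.toCoxeterSystem.IsReduced (t :: ω)) :
    t :: ω = alternatingWord s t (ω.length + 1) ∨
      t :: ω = alternatingWord t s (ω.length + 1) := by
  rcases Nat.eq_zero_or_pos ω.length with hk|hk
  · have hω : ω = [] := List.eq_nil_of_length_eq_zero hk
    subst hω
    left; simp [alternatingWord]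
  · obtain ⟨k', hk'⟩ : ∃ k', ω.length = k' + 1 := ⟨ω.length - 1, by omega⟩
    by_cases hev : Even ω.length
    · left
      conv_lhs => rw [h]
      exact alt_extend (s := s) (t := t) t ω.length (by rw [if_pos hev])
    · exfalso
      apply not_reduced_cons_cons (M := M) t (alternatingWord s t k')
      have hhead : alternatingWord s t ω.length = t :: alternatingWord s t k' := by
        rw [hk', alt_head]
        congr 1
        have : Even k' := by
          rw [hk'] at hev
          simpa [Nat.even_add_one] using hev
        rw [if_pos this]
      rw [h, hhead] at hred
      exact hred

lemma alt_aux {s t : B} (hst : s ≠ t) (i : B) (ω : List B) (hi : i = s ∨ i = t)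
    (h : ω = alternatingWord s t ω.length)
    (hred : M.toCoxeterSystem.IsReduced (i :: ω)) :
    i :: ω = alternatingWord s t (ω.length + 1) ∨
      i :: ω = alternatingWord t s (ω.length + 1) := by
  rcases hi with hi|hi
  · rw [hi] at hred ⊢
    exact alt_aux_s hst ω h hred
  · rw [hi] at hred ⊢
    exact alt_aux_t hst ω h hred

/-- A reduced word in two letters is an alternating word. -/
lemma reduced_two_letter_alternating {s t : B} (hst : s ≠ t) :
    ∀ ω : List B, (∀ i ∈ ω, i = s ∨ i = t) → M.toCoxeterSystem.IsReduced ω →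
      ω = alternatingWord s t ω.length ∨ ω = alternatingWord t s ω.length := by
  intro ω
  induction ω with
  | nil => intro _ _; left; rfl
  | cons i ω ih =>
    intro hmem hred
    have hred' : M.toCoxeterSystem.IsReduced ω := by
      have := CoxeterSystem.IsReduced.drop (ω := i :: ω) hred 1
      simpa using this
    have hi := hmem i (List.mem_cons_self (a := i) (l := ω))
    rcases ih (fun j hj => hmem j (List.mem_cons_of_mem i hj)) hred' with h|h
    · have := alt_aux hst i ω hi h hred
      simpa using this
    · have := alt_aux hst.symm i ω (hi.symm) h hred
      rw [List.length_cons]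
      tauto

lemma sigma_sq (s : B) : σ s * σ s = 1 := by
  have := M.toCoxeterSystem.simple_mul_simple_self s
  rwa [M.toCoxeterSystem_simple] at this

include hρ in
lemma N2 : ∀ n (w : M.Group) (s : B), ℓ w ≤ n →
    ¬ M.toCoxeterSystem.IsRightDescent w s → IsPos (ρ w (sroot s)) := by
  intro n
  induction n using Nat.strong_induction_on with
  | _ n ih =>
  intro w s hw hnd
  by_cases hw1 : w = 1
  · subst hw1
    rw [rho_one_apply]
    exact isPos_sroot s
  · have hlw : ℓ w ≠ 0 := fun h => hw1 (M.toCoxeterSystem.length_eq_zero_iff.mp h)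
    obtain ⟨t, ht⟩ := M.toCoxeterSystem.exists_rightDescent_of_ne_one hw1
    have hst : s ≠ t := fun h => hnd (h ▸ ht)
    obtain ⟨u, ω, hmem, hw_eq, hlen, hus, hut⟩ := strip s t (ℓ w) w le_rfl
    have hωne : ω ≠ [] := by
      intro h
      subst h
      rw [wordProd_nil, mul_one] at hw_eq
      subst hw_eq
      exact hut ht
    have hωlen : 1 ≤ ω.length := by
      cases ω with
      | nil => exact absurd rfl hωne
      | cons a l => simp
    have hured : ℓ u < n := by omega
    -- ω is reduced
    have hred : M.toCoxeterSystem.IsReduced ω := by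
      unfold CoxeterSystem.IsReduced
      have h1 := M.toCoxeterSystem.length_wordProd_le ω
      have h2 := M.toCoxeterSystem.length_mul_le u (M.toCoxeterSystem.wordProd ω)
      rw [← hw_eq] at h2
      omega
    -- classification
    rcases reduced_two_letter_alternating hst ω hmem hred with hcl|hcl
    · -- ω = alternatingWord s t k; the good case
      set k := ω.length with hk
      -- ω.concat s = alternatingWord t s (k+1) is reduced
      have hconc : ω.concat s = alternatingWord t s (k+1) := by
        rw [alternatingWord_succ t s k, hcl]
      have hws : ℓ (w * σ s) = ℓ w + 1 := length_mul_simple_of_not_descent hnd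
      have hredc : M.toCoxeterSystem.IsReduced (ω.concat s) := by
        unfold CoxeterSystem.IsReduced
        have h1 := M.toCoxeterSystem.length_wordProd_le (ω.concat s)
        have h2 : w * σ s = u * M.toCoxeterSystem.wordProd (ω.concat s) := by
          rw [M.toCoxeterSystem.wordProd_concat, M.toCoxeterSystem_simple, ← mul_assoc, ← hw_eq]
        have h3 := M.toCoxeterSystem.length_mul_le u (M.toCoxeterSystem.wordProd (ω.concat s))
        rw [← h2] at h3
        simp only [List.length_concat] at h1 ⊢
        omega
      have hbound : M s t = 0 ∨ k + 1 ≤ M s t := by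
        rw [hconc] at hredc
        have hsym : M t s = M s t := M.symmetric t s
        by_contra hc
        push_neg at hc
        obtain ⟨h0, hlt⟩ := hc
        exact M.toCoxeterSystem.not_isReduced_alternatingWord t s
          (by omega) (by omega) hredc
      -- apply the dihedral computation
      have hdih := dih hρ hst k
      rw [← hcl] at hdih
      have hb1 : M s t = 0 ∨ k + 1 ≤ M s t := hbound
      have hb2 : M s t = 0 ∨ k ≤ M s t := by
        rcases hbound with h|h
        · left; exact h
        · right; omega
      have hA : 0 ≤ (if Even k then fcoef M s t (k+1) else fcoef M s t k) := by
        split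
        · exact fcoef_nonneg hst _ hb1
        · exact fcoef_nonneg hst _ hb2
      have hB : 0 ≤ (if Even k then fcoef M s t k else fcoef M s t (k+1)) := by
        split
        · exact fcoef_nonneg hst _ hb2
        · exact fcoef_nonneg hst _ hb1
      rw [hw_eq, rho_mul_apply, hdih, map_add, map_smul, map_smul]
      apply isPos_comb hA hB
      · exact ih (ℓ u) hured u s le_rfl hus
      · exact ih (ℓ u) hured u t le_rfl hut
    · -- ω = alternatingWord t s k : contradiction with ¬descent at s
      exfalso
      set k := ω.length with hk
      have hk1 : ∃ k', k = k' + 1 := ⟨k - 1, by omega⟩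
      obtain ⟨k', hk'⟩ := hk1
      have : ω = (alternatingWord s t k').concat s := by
        rw [hcl, hk', alternatingWord_succ]
      have hw2 : w * σ s = u * M.toCoxeterSystem.wordProd (alternatingWord s t k') := by
        rw [hw_eq, this, M.toCoxeterSystem.wordProd_concat, M.toCoxeterSystem_simple]
        rw [mul_assoc, mul_assoc, sigma_sq, mul_one]
      apply hnd
      unfold CoxeterSystem.IsRightDescent
      rw [M.toCoxeterSystem_simple]
      rw [hw2]
      calc M.toCoxeterSystem.length (u * M.toCoxeterSystem.wordProd (alternatingWord s t k'))
          ≤ ℓ u + k' := by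
            have h1 := M.toCoxeterSystem.length_mul_le u
              (M.toCoxeterSystem.wordProd (alternatingWord s t k'))
            have h2 := M.toCoxeterSystem.length_wordProd_le (alternatingWord s t k')
            rw [length_alternatingWord] at h2
            omega
        _ < ℓ w := by omega

include hρ in
lemma pos_of_not_descent {w : M.Group} {s : B}
    (h : ¬ M.toCoxeterSystem.IsRightDescent w s) : IsPos (ρ w (sroot s)) :=
  N2 hρ (ℓ w) w s le_rfl h

include hρ in
lemma neg_of_descent {w : M.Group} {s : B}
    (h : M.toCoxeterSystem.IsRightDescent w s) : IsNeg (ρ w (sroot s)) := by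
  have h1 : ℓ (w * σ s) + 1 = ℓ w := length_mul_simple_lt_of_descent h
  have h2 : ¬ M.toCoxeterSystem.IsRightDescent (w * σ s) s := by
    unfold CoxeterSystem.IsRightDescent
    rw [M.toCoxeterSystem_simple, mul_assoc, sigma_sq, mul_one]
    omega
  have h3 := pos_of_not_descent hρ h2
  have h4 : ρ w (sroot s) = - ρ (w * σ s) (sroot s) := by
    conv_lhs => rw [← mul_one w, ← sigma_sq (M := M) s, ← mul_assoc]
    rw [rho_mul_apply, rho_simple_sroot hρ, rho_neg]
  rw [h4]
  exact isPos_neg_isNeg h3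

include hρ in
lemma root_dichotomy {lam : B → ℝ} (h : IsRoot M ρ lam) : IsPos lam ∨ IsNeg lam := by
  obtain ⟨w, s, rfl⟩ := h
  by_cases hd : M.toCoxeterSystem.IsRightDescent w s
  · right; exact neg_of_descent hρ hd
  · left; exact pos_of_not_descent hρ hd

/-! ### Flip lemma and reflections -/

lemma rho_sub (w : M.Group) (v v' : B → ℝ) : ρ w (v - v') = ρ w v - ρ w v' := map_sub _ _ _

lemma rho_smul (w : M.Group) (c : ℝ) (v : B → ℝ) : ρ w (c • v) = c • ρ w v := map_smul _ _ _

include hρ in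
lemma flip {γ : B → ℝ} (hroot : IsRoot M ρ γ) (hpos : IsPos γ) {t : B}
    (hneg : IsNeg (ρ (σ t) γ)) : γ = sroot t := by
  have hform : ρ (σ t) γ = γ - (2 * form M γ (sroot t)) • sroot t := hρ t γ
  have hcoord : ∀ i, i ≠ t → γ i = 0 := by
    intro i hi
    have h1 := hneg i
    rw [hform] at h1
    have hz : (sroot t) i = 0 := by
      unfold sroot; exact Pi.single_eq_of_ne hi 1
    simp only [Pi.sub_apply, Pi.smul_apply, hz, smul_eq_mul, mul_zero, sub_zero] at h1
    exact le_antisymm h1 (hpos i)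
  have hγ : γ = γ t • sroot t := by
    ext i
    by_cases hi : i = t
    · subst hi; unfold sroot; simp
    · unfold sroot
      simp [hcoord i hi, Pi.single_eq_of_ne hi]
  have hn := root_form_self hρ hroot
  rw [hγ, form_smul_left, form_smul_right, form_self_sroot] at hn
  have hγt : γ t = 1 := by
    have h0 := hpos t
    nlinarith
  rw [hγ, hγt, one_smul]

include hρ in
lemma flip' {γ : B → ℝ} (hroot : IsRoot M ρ γ) (hpos : IsPos γ) {t : B}
    (hne : γ ≠ sroot t) : IsPos (ρ (σ t) γ) := by
  rcases root_dichotomy hρ (root_rho hroot (σ t)) with h|h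
  · exact h
  · exact absurd (flip hρ hroot hpos h) hne

include hρ in
lemma exists_reflection {γ : B → ℝ} (h : IsRoot M ρ γ) :
    ∃ r : M.Group, ∀ v, ρ r v = v - (2 * form M v γ) • γ := by
  obtain ⟨u, c, rfl⟩ := h
  refine ⟨u * σ c * u⁻¹, fun v => ?_⟩
  rw [rho_mul_apply, rho_mul_apply, hρ' hρ]
  rw [rho_sub, rho_smul, rho_cancel_inv]
  congr 2
  have := form_rho hρ u (ρ u⁻¹ v) (sroot c)
  rw [rho_cancel_inv] at this
  rw [← this]

include hρ in
lemma reflection_self {γ : B → ℝ} (hroot : IsRoot M ρ γ) {r : M.Group}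
    (hr : ∀ v, ρ r v = v - (2 * form M v γ) • γ) : ρ r γ = -γ := by
  rw [hr, root_form_self hρ hroot]
  ext i
  simp only [Pi.sub_apply, Pi.smul_apply, Pi.neg_apply, smul_eq_mul]
  ring

/-! ### Dominance utilities -/

lemma dom_equivariant {a b : B → ℝ} (h : Dominates M ρ a b) (u : M.Group) :
    Dominates M ρ (ρ u a) (ρ u b) := by
  intro w hw
  rw [← rho_mul_apply] at hw ⊢
  exact h (w * u) hw

lemma dom_refl (a : B → ℝ) : Dominates M ρ a a := fun _ h => h

include hρ in
lemma pos_neg_root_false {γ : B → ℝ} (hroot : IsRoot M ρ γ) (hpos : IsPos γ)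
    (hneg : IsNeg γ) : False :=
  not_isPos_and_isNeg hρ hroot ⟨hpos, hneg⟩

/-! ### The key lemma P2: two positive roots with pairing ≤ -1 cannot be
simultaneously negative. -/

include hρ in
lemma P2 : ∀ n (u : M.Group) (γ ν : B → ℝ), ℓ u ≤ n →
    IsRoot M ρ γ → IsPos γ → IsRoot M ρ ν → IsPos ν → form M γ ν ≤ -1 →
    IsNeg (ρ u γ) → IsNeg (ρ u ν) → False := by
  intro n
  induction n using Nat.strong_induction_on with
  | _ n ih =>
  intro u γ ν hu hγr hγp hνr hνp hform hγn hνn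
  by_cases hu1 : u = 1
  · subst hu1
    rw [rho_one_apply] at hγn
    exact pos_neg_root_false hρ hγr hγp hγn
  · obtain ⟨t, ht⟩ := M.toCoxeterSystem.exists_rightDescent_of_ne_one hu1
    have hlt : ℓ (u * σ t) + 1 = ℓ u := length_mul_simple_lt_of_descent ht
    have hu' : ℓ (u * σ t) < n := by
      have : ℓ u ≠ 0 := fun h => hu1 (M.toCoxeterSystem.length_eq_zero_iff.mp h)
      omega
    have hut_neg : IsNeg (ρ u (sroot t)) := neg_of_descent hρ ht
    have hut'_pos : IsPos (ρ (u * σ t) (sroot t)) := by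
      have : ρ (u * σ t) (sroot t) = - ρ u (sroot t) := by
        rw [rho_mul_apply, rho_simple_sroot hρ, rho_neg]
      rw [this]
      exact isNeg_neg_isPos hut_neg
    -- key cancellation: ρ (u σ t) (ρ (σ t) x) = ρ u x
    have hcanc : ∀ x : B → ℝ, ρ (u * σ t) (ρ (σ t) x) = ρ u x := by
      intro x
      rw [← rho_mul_apply, mul_assoc, sigma_sq, mul_one]
    by_cases hγt : γ = sroot t
    · by_cases hνt : ν = sroot t
      · rw [hγt, hνt, form_self_sroot] at hform
        linarith
      · -- γ = α_t, ν ≠ α_t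
        set ν' := ρ (σ t) ν with hν'
        have hν'p : IsPos ν' := flip' hρ hνr hνp hνt
        have hν'r : IsRoot M ρ ν' := root_rho hνr _
        have hy : 1 ≤ form M ν' (sroot t) := by
          have h1 : form M ν' (sroot t) = - form M ν (sroot t) := by
            have h2 : form M (ρ (σ t) ν) (ρ (σ t) (sroot t)) = form M ν (sroot t) :=
              form_rho_simple hρ t ν (sroot t)
            rw [rho_simple_sroot hρ] at h2
            have h3 : form M (ρ (σ t) ν) (-(sroot t)) = - form M (ρ (σ t) ν) (sroot t) := by
              have := form_smul_right (M := M) (-1 : ℝ) (ρ (σ t) ν) (sroot t)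
              simpa using this
            rw [h3] at h2
            linarith [h2]
          rw [h1]
          have : form M ν (sroot t) ≤ -1 := by rw [← hγt, form_symm]; exact hform
          linarith
        have hν'neg : IsNeg (ρ (u * σ t) ν') := by
          rw [hcanc]
          exact hνn
        have hνneg' : IsNeg (ρ (u * σ t) ν) := by
          have hformula : ν = ν' - (2 * form M ν' (sroot t)) • sroot t := by
            have h4 := hρ t ν'
            rw [hν', rho_simple_sq hρ] at h4
            exact h4
          intro i
          rw [hformula, rho_sub, rho_smul]
          simp only [Pi.sub_apply, Pi.smul_apply, smul_eq_mul]
          have h5 := hν'neg i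
          have h6 := hut'_pos i
          nlinarith
        have hpair : form M ν' ν ≤ -1 := by
          have hformula : ν' = ν - (2 * form M ν (sroot t)) • sroot t := hρ t ν
          rw [hformula, form_sub_left, form_smul_left]
          have h7 : form M (sroot t) ν = form M ν (sroot t) := form_symm _ _
          have h8 := root_form_self hρ hνr
          have h9 : form M ν (sroot t) ≤ -1 := by rw [← hγt, form_symm]; exact hform
          nlinarith
        exact ih (ℓ (u * σ t)) hu' (u * σ t) ν' ν le_rfl hν'r hν'p hνr hνp hpair hν'neg hνneg'
    · by_cases hνt : ν = sroot t
      · -- ν = α_t, γ ≠ α_t : symmetric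
        set γ' := ρ (σ t) γ with hγ'
        have hγ'p : IsPos γ' := flip' hρ hγr hγp hγt
        have hγ'r : IsRoot M ρ γ' := root_rho hγr _
        have hy : 1 ≤ form M γ' (sroot t) := by
          have h1 : form M γ' (sroot t) = - form M γ (sroot t) := by
            have h2 : form M (ρ (σ t) γ) (ρ (σ t) (sroot t)) = form M γ (sroot t) :=
              form_rho_simple hρ t γ (sroot t)
            rw [rho_simple_sroot hρ] at h2
            have h3 : form M (ρ (σ t) γ) (-(sroot t)) = - form M (ρ (σ t) γ) (sroot t) := by
              have := form_smul_right (M := M) (-1 : ℝ) (ρ (σ t) γ) (sroot t)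
              simpa using this
            rw [h3] at h2
            linarith [h2]
          rw [h1]
          have : form M γ (sroot t) ≤ -1 := by rw [← hνt]; exact hform
          linarith
        have hγ'neg : IsNeg (ρ (u * σ t) γ') := by
          rw [hcanc]
          exact hγn
        have hγneg' : IsNeg (ρ (u * σ t) γ) := by
          have hformula : γ = γ' - (2 * form M γ' (sroot t)) • sroot t := by
            have h4 := hρ t γ'
            rw [hγ', rho_simple_sq hρ] at h4
            exact h4
          intro i
          rw [hformula, rho_sub, rho_smul]
          simp only [Pi.sub_apply, Pi.smul_apply, smul_eq_mul]
          have h5 := hγ'neg i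
          have h6 := hut'_pos i
          nlinarith
        have hpair : form M γ' γ ≤ -1 := by
          have hformula : γ' = γ - (2 * form M γ (sroot t)) • sroot t := hρ t γ
          rw [hformula, form_sub_left, form_smul_left]
          have h7 : form M (sroot t) γ = form M γ (sroot t) := form_symm _ _
          have h8 := root_form_self hρ hγr
          have h9 : form M γ (sroot t) ≤ -1 := by rw [← hνt]; exact hform
          nlinarith
        exact ih (ℓ (u * σ t)) hu' (u * σ t) γ' γ le_rfl hγ'r hγ'p hγr hγp hpair hγ'neg hγneg'
      · -- generic case
        have h1 : IsPos (ρ (σ t) γ) := flip' hρ hγr hγp hγt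
        have h2 : IsPos (ρ (σ t) ν) := flip' hρ hνr hνp hνt
        have h3 : IsNeg (ρ (u * σ t) (ρ (σ t) γ)) := by rw [hcanc]; exact hγn
        have h4 : IsNeg (ρ (u * σ t) (ρ (σ t) ν)) := by rw [hcanc]; exact hνn
        have h5 : form M (ρ (σ t) γ) (ρ (σ t) ν) ≤ -1 := by
          rw [form_rho_simple hρ]
          exact hform
        exact ih (ℓ (u * σ t)) hu' (u * σ t) _ _ le_rfl
          (root_rho hγr _) h1 (root_rho hνr _) h2 h5 h3 h4

/-! ### The dominance criterion -/

include hρ in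
/-- If `β` is a positive root with `⟨β, α_s⟩ ≥ 1` then `β` dominates `α_s`. -/
lemma star {β : B → ℝ} (hroot : IsRoot M ρ β) (hpos : IsPos β) {s : B}
    (hform : 1 ≤ form M β (sroot s)) : Dominates M ρ β (sroot s) := by
  by_cases hβs : β = sroot s
  · subst hβs; exact dom_refl _
  · intro v hv
    by_contra hnp
    have hβneg : IsNeg (ρ v β) := by
      rcases root_dichotomy hρ (root_rho hroot v) with h|h
      · exact absurd h hnp
      · exact h
    set β' := ρ (σ s) β with hβ'
    have hβ'p : IsPos β' := flip' hρ hroot hpos hβs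
    have hβ'r : IsRoot M ρ β' := root_rho hroot _
    have hβ'formula : β' = β - (2 * form M β (sroot s)) • sroot s := hρ s β
    have hβ'neg : IsNeg (ρ v β') := by
      intro i
      rw [hβ'formula, rho_sub, rho_smul]
      simp only [Pi.sub_apply, Pi.smul_apply, smul_eq_mul]
      have h1 := hβneg i
      have h2 := hv i
      nlinarith
    have hpair : form M β β' ≤ -1 := by
      rw [hβ'formula, form_sub_right, form_smul_right]
      have h8 := root_form_self hρ hroot
      nlinarith
    exact P2 hρ (ℓ v) v β β' le_rfl hroot hpos hβ'r hβ'p hpair hβneg hβ'neg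

include hρ in
/-- A positive root dominating another vector `ν ≠ γ` with `⟨γ,ν⟩ ≤ 0`: impossible
when `ν` is a positive root. -/
lemma dom_caseA {γ ν : B → ℝ} (hγr : IsRoot M ρ γ) (hγp : IsPos γ)
    (hνp : IsPos ν) (hdom : Dominates M ρ γ ν) (hx : form M γ ν ≤ 0) : False := by
  obtain ⟨r, hr⟩ := exists_reflection hρ hγr
  have h1 : IsPos (ρ r ν) := by
    rw [hr]
    intro i
    simp only [Pi.sub_apply, Pi.smul_apply, smul_eq_mul]
    have h2 := hνp i
    have h3 := hγp i
    have h4 : form M ν γ ≤ 0 := by rw [form_symm]; exact hx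
    nlinarith
  have h5 := hdom r h1
  rw [reflection_self hρ hγr hr] at h5
  have h6 : IsNeg γ := isPos_neg_iff.mp h5
  exact pos_neg_root_false hρ hγr hγp h6

include hρ in
/-- The doubling step. -/
lemma dom_step {γ ν : B → ℝ} (hγr : IsRoot M ρ γ) (hγp : IsPos γ)
    (hνr : IsRoot M ρ ν) (hνp : IsPos ν)
    (hdom : Dominates M ρ γ ν) (hne : γ ≠ ν)
    (hx0 : 0 < form M γ ν) (hx1 : form M γ ν < 1) :
    ∃ γ' : B → ℝ, IsRoot M ρ γ' ∧ IsPos γ' ∧ Dominates M ρ γ' ν ∧ γ' ≠ ν ∧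
      form M γ' ν = 2 * (form M γ ν)^2 - 1 := by
  obtain ⟨r, hr⟩ := exists_reflection hρ hγr
  set x := form M γ ν with hxdef
  have hrν : ρ r ν = ν - (2 * form M ν γ) • γ := hr ν
  have hrνroot : IsRoot M ρ (ρ r ν) := root_rho hνr r
  have hrγ : ρ r γ = -γ := reflection_self hρ hγr hr
  -- ρ r ν is not positive
  have hrνnp : ¬ IsPos (ρ r ν) := by
    intro hp
    have := hdom r hp
    rw [hrγ] at this
    exact pos_neg_root_false hρ hγr hγp (isPos_neg_iff.mp this)
  have hrνneg : IsNeg (ρ r ν) := by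
    rcases root_dichotomy hρ hrνroot with h|h
    · exact absurd h hrνnp
    · exact h
  refine ⟨-(ρ r ν), root_neg hρ (root_rho hνr r), isNeg_neg_isPos hrνneg, ?_, ?_, ?_⟩
  · -- Dominates (-(ρ r ν)) ν
    intro v hv
    have hγv : IsPos (ρ v γ) := hdom v hv
    by_contra hnp
    have hneg : IsNeg (ρ v (-(ρ r ν))) := by
      rcases root_dichotomy hρ (root_rho (root_neg hρ (root_rho hνr r)) v) with h|h
      · exact absurd h hnp
      · exact h
    -- equivariance: Dominates (ρ r γ) (ρ r ν), i.e. Dominates (-γ) (ρ r ν)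
    have hE : Dominates M ρ (-γ) (ρ r ν) := by
      have := dom_equivariant (ρ := ρ) hdom r
      rwa [hrγ] at this
    have h7 : IsPos (ρ v (ρ r ν)) := by
      have h8 : ρ v (-(ρ r ν)) = -(ρ v (ρ r ν)) := rho_neg v _
      rw [h8] at hneg
      rcases root_dichotomy hρ (root_rho hrνroot v) with h|h
      · exact h
      · -- then ρ v (ρ r ν) is both positive and negative: contradiction
        exfalso
        apply pos_neg_root_false hρ (root_rho hrνroot v) _ h
        rwa [isNeg_neg_iff] at hneg
    have h9 := hE v h7
    have h10 : IsNeg (ρ v γ) := by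
      have h11 : ρ v (-γ) = -(ρ v γ) := rho_neg v γ
      rw [h11] at h9
      exact isPos_neg_iff.mp h9
    exact pos_neg_root_false hρ (root_rho hγr v) hγv h10
  · -- -(ρ r ν) ≠ ν
    intro h
    have hveq : (2 * form M ν γ) • γ = (2:ℝ) • ν := by
      have : -(ν - (2 * form M ν γ) • γ) = ν := by rw [← hrν]; exact h
      ext i
      have h12 := congrFun this i
      simp only [Pi.neg_apply, Pi.sub_apply, Pi.smul_apply, smul_eq_mul] at h12 ⊢
      linarith
    have h13 : form M ((2 * form M ν γ) • γ) ((2 * form M ν γ) • γ) =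
        form M ((2:ℝ) • ν) ((2:ℝ) • ν) := by rw [hveq]
    rw [form_smul_left, form_smul_right, form_smul_left, form_smul_right,
      root_form_self hρ hγr, root_form_self hρ hνr] at h13
    have h14 : form M ν γ = x := by rw [form_symm]
    rw [h14] at h13
    nlinarith
  · -- pairing
    have h15 : form M (-(ρ r ν)) ν = - form M (ρ r ν) ν := form_neg_left _ _
    rw [h15, hrν, form_sub_left, form_smul_left]
    have h16 : form M ν ν = 1 := root_form_self hρ hνr
    have h17 : form M ν γ = x := by rw [form_symm]
    have h18 : form M γ ν = x := rfl
    nlinarith [h16, h17, h18]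

include hρ in
lemma dom_aux : ∀ k : ℕ, ∀ γ : B → ℝ, ∀ ν : B → ℝ,
    IsRoot M ρ γ → IsPos γ → IsRoot M ρ ν → IsPos ν →
    Dominates M ρ γ ν → γ ≠ ν →
    0 < form M γ ν → form M γ ν < 1 →
    Real.pi / (2 * 2^k) ≤ Real.arccos (form M γ ν) → False := by
  intro k
  induction k with
  | zero =>
    intro γ ν hγr hγp hνr hνp hdom hne hx0 hx1 hk
    norm_num at hk
    have h1 : Real.arccos (form M γ ν) ≤ Real.pi := Real.arccos_le_pi _
    have h2 : Real.cos (Real.arccos (form M γ ν)) ≤ 0 :=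
      Real.cos_nonpos_of_pi_div_two_le_of_le hk (by linarith [Real.pi_pos])
    rw [Real.cos_arccos (by linarith) (by linarith)] at h2
    linarith
  | succ k ih =>
    intro γ ν hγr hγp hνr hνp hdom hne hx0 hx1 hk
    obtain ⟨γ', hγ'r, hγ'p, hdom', hne', hform'⟩ :=
      dom_step hρ hγr hγp hνr hνp hdom hne hx0 hx1
    set x := form M γ ν with hxdef
    have hx'lt1 : form M γ' ν < 1 := by rw [hform']; nlinarith
    rcases le_or_gt (form M γ' ν) 0 with h|h
    · exact dom_caseA hρ hγ'r hγ'p hνp hdom' h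
    · apply ih γ' ν hγ'r hγ'p hνr hνp hdom' hne' h hx'lt1
      -- arccos (form γ' ν) = 2 * arccos x
      have ha1 : 0 ≤ Real.arccos x := Real.arccos_nonneg _
      have ha2 : Real.arccos x ≤ Real.pi / 2 := by
        rw [Real.arccos, sub_le_self_iff]
        exact Real.arcsin_nonneg.mpr hx0.le
      have ha3 : Real.cos (2 * Real.arccos x) = 2 * x^2 - 1 := by
        rw [Real.cos_two_mul, Real.cos_arccos (by linarith) (by linarith)]
      have ha4 : Real.arccos (form M γ' ν) = 2 * Real.arccos x := by
        rw [hform', ← ha3]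
        exact Real.arccos_cos (by linarith) (by linarith)
      rw [ha4]
      rw [div_le_iff₀ (by positivity)] at hk ⊢
      ring_nf at hk ⊢
      nlinarith [hk]

include hρ in
/-- Forward criterion: if a positive root `γ` dominates a positive root `ν ≠ γ`,
then `⟨γ,ν⟩ ≥ 1`. -/
lemma forward {γ ν : B → ℝ} (hγr : IsRoot M ρ γ) (hγp : IsPos γ)
    (hνr : IsRoot M ρ ν) (hνp : IsPos ν)
    (hdom : Dominates M ρ γ ν) (hne : γ ≠ ν) : 1 ≤ form M γ ν := by
  by_contra hlt
  push_neg at hlt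
  rcases le_or_gt (form M γ ν) 0 with h|h
  · exact dom_caseA hρ hγr hγp hνp hdom h
  · have hpos : 0 < Real.arccos (form M γ ν) := Real.arccos_pos.mpr hlt
    obtain ⟨k, hk⟩ := pow_unbounded_of_one_lt (Real.pi / (2 * Real.arccos (form M γ ν)))
      (by norm_num : (1:ℝ) < 2)
    apply dom_aux hρ k γ ν hγr hγp hνr hνp hdom hne h hlt
    rw [div_le_iff₀ (by positivity)]
    rw [div_lt_iff₀ (by positivity)] at hk
    nlinarith [hk, hpos]

/-! ### Depth -/

lemma sigma_inv (t : B) : (σ t)⁻¹ = σ t := inv_eq_of_mul_eq_one_right (sigma_sq t)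

include hρ in
lemma depth_set_nonempty {lam : B → ℝ} (hroot : IsRoot M ρ lam) (hpos : IsPos lam) :
    {n | ∃ w : M.Group, IsNeg (ρ w⁻¹ lam) ∧ ℓ w = n}.Nonempty := by
  obtain ⟨v, c, rfl⟩ := hroot
  refine ⟨ℓ (v * σ c * v⁻¹), v * σ c * v⁻¹, ?_, rfl⟩
  have h1 : (v * σ c * v⁻¹)⁻¹ = v * σ c * v⁻¹ := by
    rw [mul_inv_rev, mul_inv_rev, sigma_inv, inv_inv, mul_assoc]
  rw [h1]
  have h2 : ρ (v * σ c * v⁻¹) (ρ v (sroot c)) = -(ρ v (sroot c)) := by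
    rw [rho_mul_apply, rho_mul_apply, rho_inv_cancel, rho_simple_sroot hρ, rho_neg]
  rw [h2]
  exact isPos_neg_isNeg hpos

include hρ in
lemma depth_mem {lam : B → ℝ} (hroot : IsRoot M ρ lam) (hpos : IsPos lam) :
    ∃ w : M.Group, IsNeg (ρ w⁻¹ lam) ∧ ℓ w = depth M ρ lam :=
  Nat.sInf_mem (depth_set_nonempty hρ hroot hpos)

lemma depth_le {lam : B → ℝ} {u : M.Group} (h : IsNeg (ρ u⁻¹ lam)) :
    depth M ρ lam ≤ ℓ u :=
  Nat.sInf_le ⟨u, h, rfl⟩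

include hρ in
lemma depth_pos {lam : B → ℝ} (hroot : IsRoot M ρ lam) (hpos : IsPos lam) :
    1 ≤ depth M ρ lam := by
  by_contra h
  push_neg at h
  interval_cases hd : depth M ρ lam
  · obtain ⟨w, hneg, hlen⟩ := depth_mem hρ hroot hpos
    rw [hd] at hlen
    have hw1 : w = 1 := M.toCoxeterSystem.length_eq_zero_iff.mp hlen
    rw [hw1] at hneg
    simp only [inv_one] at hneg
    rw [rho_one_apply] at hneg
    exact pos_neg_root_false hρ hroot hpos hneg

include hρ in
lemma isPos_of_depth_pos {lam : B → ℝ} (hroot : IsRoot M ρ lam)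
    (hd : 1 ≤ depth M ρ lam) : IsPos lam := by
  rcases root_dichotomy hρ hroot with h|h
  · exact h
  · exfalso
    have h1 : depth M ρ lam ≤ ℓ (1 : M.Group) := by
      apply depth_le
      simp only [inv_one]
      rwa [rho_one_apply]
    rw [M.toCoxeterSystem.length_one] at h1
    omega

include hρ in
lemma depth_subadd {lam : B → ℝ} (hroot : IsRoot M ρ lam) (hpos : IsPos lam) (t : B) :
    depth M ρ (ρ (σ t) lam) ≤ depth M ρ lam + 1 := by
  obtain ⟨w, hneg, hlen⟩ := depth_mem hρ hroot hpos
  have h1 : IsNeg (ρ (σ t * w)⁻¹ (ρ (σ t) lam)) := by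
    rw [mul_inv_rev, sigma_inv, rho_mul_apply, rho_simple_sq hρ]
    exact hneg
  have h2 := depth_le (ρ := ρ) h1
  have h3 : ℓ (σ t * w) ≤ 1 + ℓ w := by
    have h4 := M.toCoxeterSystem.length_mul_le (σ t) w
    have h5 : ℓ (σ t) = 1 := by
      have := M.toCoxeterSystem.length_simple t
      rwa [M.toCoxeterSystem_simple] at this
    omega
  omega

include hρ in
lemma depth_le_of_form_nonneg {lam : B → ℝ} (hroot : IsRoot M ρ lam) (hpos : IsPos lam)
    {t : B} (hf : 0 ≤ form M lam (sroot t)) :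
    depth M ρ (ρ (σ t) lam) ≤ depth M ρ lam := by
  rcases eq_or_lt_of_le hf with hf0|hfpos
  · have : ρ (σ t) lam = lam := by
      rw [hρ' hρ, ← hf0]
      ext i; simp
    rw [this]
  · obtain ⟨w, hneg, hlen⟩ := depth_mem hρ hroot hpos
    by_cases hd : M.toCoxeterSystem.IsRightDescent w⁻¹ t
    · -- use σ t * w
      have h1 : IsNeg (ρ (σ t * w)⁻¹ (ρ (σ t) lam)) := by
        rw [mul_inv_rev, sigma_inv, rho_mul_apply, rho_simple_sq hρ]
        exact hneg
      have h2 := depth_le (ρ := ρ) h1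
      have h3 : ℓ (σ t * w) < ℓ w := by
        have h4 : ℓ (σ t * w) = ℓ ((σ t * w)⁻¹) := (M.toCoxeterSystem.length_inv _).symm
        have h5 : (σ t * w)⁻¹ = w⁻¹ * σ t := by rw [mul_inv_rev, sigma_inv]
        have h6 := length_mul_simple_lt_of_descent hd
        have h7 : ℓ w = ℓ w⁻¹ := (M.toCoxeterSystem.length_inv _).symm
        rw [h4, h5]
        omega
      omega
    · -- ρ (w⁻¹) (sroot t) is positive; use w itself
      have h1 : IsPos (ρ w⁻¹ (sroot t)) := pos_of_not_descent hρ hd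
      have h2 : IsNeg (ρ w⁻¹ (ρ (σ t) lam)) := by
        rw [hρ' hρ, rho_sub, rho_smul]
        intro i
        simp only [Pi.sub_apply, Pi.smul_apply, smul_eq_mul]
        have h3 := hneg i
        have h4 := h1 i
        nlinarith
      have h5 := depth_le (ρ := ρ) h2
      omega

include hρ in
lemma form_neg_of_depth_up {lam : B → ℝ} (hroot : IsRoot M ρ lam) (hpos : IsPos lam)
    {t : B} (hd : depth M ρ (ρ (σ t) lam) = depth M ρ lam + 1) :
    form M lam (sroot t) < 0 := by
  by_contra h
  push_neg at h
  have := depth_le_of_form_nonneg hρ hroot hpos h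
  omega

/-! ### Minimality, dominance of simple roots, downward closure -/

lemma rho_inj {u : M.Group} {a b : B → ℝ} (h : ρ u a = ρ u b) : a = b := by
  have := congrArg (ρ u⁻¹) h
  rwa [rho_inv_cancel, rho_inv_cancel] at this

include hρ in
lemma form_rho_simple_right (i : B) (a b : B → ℝ) :
    form M (ρ (σ i) a) b = form M a (ρ (σ i) b) := by
  conv_lhs => rw [← rho_simple_sq hρ i b]
  rw [form_rho_simple hρ]

include hρ in
lemma form_rho_simple_sroot (s : B) (v : B → ℝ) :
    form M (ρ (σ s) v) (sroot s) = - form M v (sroot s) := by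
  rw [form_rho_simple_right hρ, rho_simple_sroot hρ]
  rw [form_symm, form_neg_left, form_symm]

include hρ in
lemma isPosRoot_sroot (s : B) : IsPosRoot M ρ (sroot s) :=
  ⟨(isRoot_sroot s), isPos_sroot s⟩

include hρ in
/-- If `λ` is minimal and `σ_s λ` is a non-minimal positive root, then `σ_s λ`
dominates `α_s` and differs from it. -/
lemma nonminimal_dom {lam : B → ℝ} (hmin : IsMinimal M ρ lam) (s : B)
    (h1 : IsPosRoot M ρ (ρ (σ s) lam)) (h2 : ¬ IsMinimal M ρ (ρ (σ s) lam)) :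
    Dominates M ρ (ρ (σ s) lam) (sroot s) ∧ ρ (σ s) lam ≠ sroot s := by
  have hne : ρ (σ s) lam ≠ sroot s := by
    intro h
    have h3 : lam = ρ (σ s) (sroot s) := by
      rw [← h, rho_simple_sq hρ]
    rw [rho_simple_sroot hρ] at h3
    have h4 := hmin.1.2 s
    rw [h3] at h4
    simp only [Pi.neg_apply] at h4
    unfold sroot at h4
    rw [Pi.single_eq_same] at h4
    linarith
  refine ⟨?_, hne⟩
  unfold IsMinimal at h2
  push_neg at h2
  obtain ⟨ν, hνpr, hνdom, hνne⟩ := h2 h1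
  -- ρ (σ s) ν is not positive
  have h5 : Dominates M ρ lam (ρ (σ s) ν) := by
    have := dom_equivariant (ρ := ρ) hνdom (σ s)
    rwa [rho_simple_sq hρ] at this
  have h6 : ¬ IsPos (ρ (σ s) ν) := by
    intro hp
    have h7 := hmin.2 (ρ (σ s) ν) ⟨root_rho hνpr.1 _, hp⟩ h5
    apply hνne
    rw [← h7] at *
    exact rho_inj (u := σ s) (by rw [rho_simple_sq hρ, h7])
  have h8 : IsNeg (ρ (σ s) ν) := by
    rcases root_dichotomy hρ (root_rho hνpr.1 (σ s)) with h|h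
    · exact absurd h h6
    · exact h
  have h9 : ν = sroot s := flip hρ hνpr.1 hνpr.2 h8
  rwa [h9] at hνdom

include hρ in
lemma form_le_neg_one {lam : B → ℝ} (hmin : IsMinimal M ρ lam) (s : B)
    (h1 : IsPosRoot M ρ (ρ (σ s) lam)) (h2 : ¬ IsMinimal M ρ (ρ (σ s) lam)) :
    form M lam (sroot s) ≤ -1 := by
  obtain ⟨hdom, hne⟩ := nonminimal_dom hρ hmin s h1 h2
  have h3 : 1 ≤ form M (ρ (σ s) lam) (sroot s) :=
    forward hρ h1.1 h1.2 (isRoot_sroot s) (isPos_sroot s) hdom hne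
  have h4 := form_rho_simple_sroot hρ s lam
  linarith

include hρ in
/-- Single-step downward closure of minimality along depth-increasing steps. -/
lemma minimal_down {κ : B → ℝ} (hκr : IsRoot M ρ κ) (hκp : IsPos κ) (t : B)
    (hmin' : IsMinimal M ρ (ρ (σ t) κ))
    (hdep : depth M ρ (ρ (σ t) κ) = depth M ρ κ + 1) : IsMinimal M ρ κ := by
  refine ⟨⟨hκr, hκp⟩, ?_⟩
  intro τ hτ hdomτ
  by_contra hτκ
  have hd2 : Dominates M ρ (ρ (σ t) κ) (ρ (σ t) τ) := dom_equivariant hdomτ (σ t)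
  rcases root_dichotomy hρ (root_rho hτ.1 (σ t)) with h|h
  · have h3 := hmin'.2 (ρ (σ t) τ) ⟨root_rho hτ.1 _, h⟩ hd2
    exact hτκ (rho_inj (u := σ t) h3)
  · have h4 : τ = sroot t := flip hρ hτ.1 hτ.2 h
    subst h4
    have h5 : κ ≠ sroot t := fun hc => hτκ hc.symm
    have h6 : 1 ≤ form M κ (sroot t) :=
      forward hρ hκr hκp (isRoot_sroot t) (isPos_sroot t) hdomτ h5
    have h7 := form_neg_of_depth_up hρ hκr hκp hdep
    linarith

include hρ in
lemma depth_subadd_root {lam : B → ℝ} (hroot : IsRoot M ρ lam) (t : B) :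
    depth M ρ (ρ (σ t) lam) ≤ depth M ρ lam + 1 := by
  rcases root_dichotomy hρ hroot with h|h
  · exact depth_subadd hρ hroot h t
  · have h1 : IsNeg (ρ (σ t)⁻¹ (ρ (σ t) lam)) := by
      rw [sigma_inv, rho_simple_sq hρ]
      exact h
    have h2 := depth_le (ρ := ρ) h1
    have h3 : ℓ (σ t) = 1 := by
      have := M.toCoxeterSystem.length_simple t
      rwa [M.toCoxeterSystem_simple] at this
    omega

include hρ in
lemma depth_word_subadd (lam : B → ℝ) (hroot : IsRoot M ρ lam) :
    ∀ ω : List B, depth M ρ (ρ (M.toCoxeterSystem.wordProd ω) lam) ≤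
      depth M ρ lam + ω.length := by
  intro ω
  induction ω with
  | nil => rw [wordProd_nil, rho_one_apply]; omega
  | cons i ω ih =>
    rw [wordProd_cons, M.toCoxeterSystem_simple, rho_mul_apply]
    have h1 := depth_subadd_root hρ (root_rho hroot (M.toCoxeterSystem.wordProd ω)) i
    simp only [List.length_cons]
    omega

/-! ### The chain lemma -/

include hρ in
lemma Wprime (s : B) : ∀ (ω : List B) (lam : B → ℝ),
    IsRoot M ρ lam → IsPos lam →
    IsMinimal M ρ (ρ (M.toCoxeterSystem.wordProd ω) lam) →
    depth M ρ (ρ (M.toCoxeterSystem.wordProd ω) lam) = depth M ρ lam + ω.length →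
    form M lam (sroot s) ≤ -1 →
    (form M (ρ (M.toCoxeterSystem.wordProd ω) lam) (sroot s) ≤ -1 ∨
     IsNeg (ρ (M.toCoxeterSystem.wordProd ω) (sroot s)) ∨
     ρ (M.toCoxeterSystem.wordProd ω) (sroot s) = sroot s) := by
  intro ω
  induction ω with
  | nil =>
    intro lam _ _ _ _ hform
    rw [wordProd_nil, rho_one_apply]
    left; exact hform
  | cons i ω ih =>
    intro lam hroot hpos hminμ hdep hform
    have hcons : ∀ v : B → ℝ, ρ (M.toCoxeterSystem.wordProd (i :: ω)) v =
        ρ (σ i) (ρ (M.toCoxeterSystem.wordProd ω) v) := by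
      intro v
      rw [wordProd_cons, M.toCoxeterSystem_simple, rho_mul_apply]
    set μ' := ρ (M.toCoxeterSystem.wordProd ω) lam with hμ'
    have hμ'root : IsRoot M ρ μ' := root_rho hroot _
    have hμroot : IsRoot M ρ (ρ (σ i) μ') := root_rho hμ'root _
    rw [hcons] at hminμ hdep
    rw [← hμ'] at hminμ hdep
    -- depth bookkeeping
    have hsub1 : depth M ρ (ρ (σ i) μ') ≤ depth M ρ μ' + 1 := depth_subadd_root hρ hμ'root i
    have hsub2 : depth M ρ μ' ≤ depth M ρ lam + ω.length := depth_word_subadd hρ lam hroot ω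
    have hlam1 : 1 ≤ depth M ρ lam := depth_pos hρ hroot hpos
    simp only [List.length_cons] at hdep
    have hdμ' : depth M ρ μ' = depth M ρ lam + ω.length := by omega
    have hdstep : depth M ρ (ρ (σ i) μ') = depth M ρ μ' + 1 := by omega
    -- μ' is a positive root
    have hμ'pos : IsPos μ' := isPos_of_depth_pos hρ hμ'root (by omega)
    -- μ' is minimal
    have hμ'min : IsMinimal M ρ μ' := minimal_down hρ hμ'root hμ'pos i hminμ hdstep
    -- step pairing
    have hstep : form M μ' (sroot i) < 0 := form_neg_of_depth_up hρ hμ'root hμ'pos hdstep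
    -- apply the inductive hypothesis
    rcases ih lam hroot hpos hμ'min hdμ' hform with hc1|hc2|hc3
    · -- form μ' α_s ≤ -1
      by_cases his : i = s
      · -- flip case: would make ρ(σ s)μ' dominate α_s, contradicting minimality of μ = σ_s μ'
        exfalso
        subst his
        have hx : 1 ≤ form M (ρ (σ i) μ') (sroot i) := by
          have := form_rho_simple_sroot hρ i μ'
          linarith
        by_cases heq : ρ (σ i) μ' = sroot i
        · -- then μ' = -α_i, contradicting positivity
          have h3 : μ' = ρ (σ i) (sroot i) := by rw [← heq, rho_simple_sq hρ]
          rw [rho_simple_sroot hρ] at h3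
          have h4 := hμ'pos i
          rw [h3] at h4
          simp only [Pi.neg_apply] at h4
          unfold sroot at h4
          rw [Pi.single_eq_same] at h4
          linarith
        · have hdom : Dominates M ρ (ρ (σ i) μ') (sroot i) :=
            star hρ hμroot hminμ.1.2 hx
          have h5 := hminμ.2 (sroot i) (isPosRoot_sroot hρ i) hdom
          exact heq h5.symm
      · -- i ≠ s : pairing decreases
        left
        rw [hcons]
        have hform_transport : form M (ρ (σ i) μ') (sroot s) =
            form M μ' (sroot s) - 2 * pairing M s i * form M μ' (sroot i) := by
          rw [form_rho_simple_right hρ, hρ' hρ, form_sub_right, form_smul_right]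
          rw [form_symm (M := M) (sroot s) (sroot i), form_sroot_sroot]
          rw [pairing_symm (M := M) i s]
        have hp : pairing M s i ≤ 0 := pairing_nonpos (fun h => his h.symm)
        rw [hform_transport]
        nlinarith
    · -- middle case : ρ(πω) α_s is negative
      set η' := ρ (M.toCoxeterSystem.wordProd ω) (sroot s) with hη'
      have hη'root : IsRoot M ρ η' := root_rho (isRoot_sroot s) _
      by_cases hbad : η' = -(sroot i)
      · -- excluded: form μ' α_i would be ≥ 1
        exfalso
        have h6 : form M μ' (sroot i) = - form M lam (sroot s) := by
          have h7 : form M μ' η' = form M lam (sroot s) := form_rho hρ _ lam (sroot s)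
          rw [← h7, hbad, form_neg_right]
          ring
        rw [h6] at hstep
        linarith
      · right; left
        rw [hcons]
        have h8 : IsPos (-η') := isNeg_neg_isPos hc2
        have h9 : -η' ≠ sroot i := by
          intro h
          apply hbad
          rw [← h]; ext j; simp
        have h10 : IsPos (ρ (σ i) (-η')) := flip' hρ (root_neg hρ hη'root) h8 h9
        rw [rho_neg] at h10
        intro j
        have := h10 j
        simp only [Pi.neg_apply] at this
        linarith
    · -- last case : ρ(πω) α_s = α_s
      rw [hcons (sroot s), hc3]
      by_cases his : i = s
      · subst his
        right; left
        rw [rho_simple_sroot hρ]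
        exact isPos_neg_isNeg (isPos_sroot i)
      · have hformη : ρ (σ i) (sroot s) = sroot s - (2 * pairing M s i) • sroot i := by
          rw [hρ' hρ, form_sroot_sroot]
        by_cases hzero : pairing M s i = 0
        · right; right
          rw [hformη, hzero]
          ext j; simp
        · left
          rw [hcons]
          have hform_transport : form M (ρ (σ i) μ') (sroot s) =
              form M μ' (sroot s) - 2 * pairing M s i * form M μ' (sroot i) := by
            rw [form_rho_simple_right hρ, hρ' hρ, form_sub_right, form_smul_right]
            rw [form_symm (M := M) (sroot s) (sroot i), form_sroot_sroot]
            rw [pairing_symm (M := M) i s]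
          have hμ's : form M μ' (sroot s) = form M lam (sroot s) := by
            have h11 := form_rho hρ (M.toCoxeterSystem.wordProd ω) lam (sroot s)
            rw [hc3] at h11
            exact h11
          have hp : pairing M s i ≤ 0 := pairing_nonpos (fun h => his h.symm)
          have hp' : pairing M s i < 0 := lt_of_le_of_ne hp hzero
          rw [hform_transport, hμ's]
          nlinarith

/-! ### Final assembly -/

include hρ in
lemma sroot_coord_self (s : B) : sroot (B := B) s s = 1 := by
  unfold sroot; rw [Pi.single_eq_same]

include hρ in
lemma conclude {mu : B → ℝ} {s : B} (hmu : IsMinimal M ρ mu)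
    (hsμpos : IsPos (ρ (σ s) mu)) (hx : form M mu (sroot s) ≤ -1) :
    IsPosRoot M ρ (ρ (σ s) mu) ∧ ¬ IsMinimal M ρ (ρ (σ s) mu) := by
  have hsμroot : IsRoot M ρ (ρ (σ s) mu) := root_rho hmu.1.1 _
  have hx' : 1 ≤ form M (ρ (σ s) mu) (sroot s) := by
    have := form_rho_simple_sroot hρ s mu
    linarith
  have hne : ρ (σ s) mu ≠ sroot s := by
    intro h
    have h3 : mu = ρ (σ s) (sroot s) := by rw [← h, rho_simple_sq hρ]
    rw [rho_simple_sroot hρ] at h3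
    have h4 := hmu.1.2 s
    rw [h3] at h4
    simp only [Pi.neg_apply] at h4
    rw [sroot_coord_self hρ] at h4
    linarith
  have hdom : Dominates M ρ (ρ (σ s) mu) (sroot s) := star hρ hsμroot hsμpos hx'
  refine ⟨⟨hsμroot, hsμpos⟩, ?_⟩
  intro hmin
  exact hne (hmin.2 (sroot s) (isPosRoot_sroot hρ s) hdom).symm

include hρ in
lemma main_statement (lam mu : B → ℝ) (hlam : IsMinimal M ρ lam)
    (hmu : IsMinimal M ρ mu) (hle : PLE M ρ lam mu) (s : B)
    (h1 : IsPosRoot M ρ (ρ (σ s) lam)) (h2 : ¬ IsMinimal M ρ (ρ (σ s) lam)) :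
    IsPosRoot M ρ (ρ (σ s) mu) ∧ ¬ IsMinimal M ρ (ρ (σ s) mu) := by
  obtain ⟨w, hw_eq, hdep⟩ := hle
  have hxlam : form M lam (sroot s) ≤ -1 := form_le_neg_one hρ hlam s h1 h2
  have hlamdepth : 1 ≤ depth M ρ lam := depth_pos hρ hlam.1.1 hlam.1.2
  have hmudepth : 1 ≤ depth M ρ mu := depth_pos hρ hmu.1.1 hmu.1.2
  -- Part A : ρ (σ s) mu is positive
  have hsμroot : IsRoot M ρ (ρ (σ s) mu) := root_rho hmu.1.1 _
  have hsμpos : IsPos (ρ (σ s) mu) := by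
    rcases root_dichotomy hρ hsμroot with h|h
    · exact h
    · exfalso
      have hμs : mu = sroot s := flip hρ hmu.1.1 hmu.1.2 h
      have hd1 : depth M ρ mu ≤ 1 := by
        have h5 : IsNeg (ρ (σ s)⁻¹ mu) := by
          rw [sigma_inv, hμs, rho_simple_sroot hρ]
          exact isPos_neg_isNeg (isPos_sroot s)
        have h6 := depth_le (ρ := ρ) h5
        have h7 : ℓ (σ s) = 1 := by
          have := M.toCoxeterSystem.length_simple s
          rwa [M.toCoxeterSystem_simple] at this
        omega
      have hw0 : ℓ w = 0 := by omega
      have hw1 : w = 1 := M.toCoxeterSystem.length_eq_zero_iff.mp hw0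
      rw [hw1, rho_one_apply] at hw_eq
      -- mu = lam = α_s, so ρ (σ s) lam = -α_s, contradicting h1
      have h8 := h1.2 s
      rw [← hw_eq, hμs, rho_simple_sroot hρ] at h8
      simp only [Pi.neg_apply] at h8
      rw [sroot_coord_self hρ] at h8
      linarith
  obtain ⟨ω, hωlen, hword⟩ := M.toCoxeterSystem.exists_reduced_word w
  have hμω : ρ (M.toCoxeterSystem.wordProd ω) lam = mu := by rw [← hword, hw_eq]
  have hWdep : depth M ρ (ρ (M.toCoxeterSystem.wordProd ω) lam) =
      depth M ρ lam + ω.length := by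
    rw [hμω, ← hωlen.eq, ← hword]
    omega
  have hWmin : IsMinimal M ρ (ρ (M.toCoxeterSystem.wordProd ω) lam) := by
    rw [hμω]; exact hmu
  rcases Wprime hρ s ω lam hlam.1.1 hlam.1.2 hWmin hWdep hxlam with hc1|hc2|hc3
  · rw [hμω] at hc1
    exact conclude hρ hmu hsμpos hc1
  · -- ρ w α_s is negative
    rw [hword] at hw_eq
    by_cases hη : ρ (M.toCoxeterSystem.wordProd ω) (sroot s) = -(sroot s)
    · exfalso
      -- form mu α_s ≥ 1, so mu dominates α_s, contradicting minimality
      have h9 := form_rho hρ (M.toCoxeterSystem.wordProd ω) lam (sroot s)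
      rw [hη, hμω, form_neg_right] at h9
      have h10 : 1 ≤ form M mu (sroot s) := by linarith
      by_cases hμαs : mu = sroot s
      · have h11 := hsμpos s
        rw [hμαs, rho_simple_sroot hρ] at h11
        simp only [Pi.neg_apply] at h11
        rw [sroot_coord_self hρ] at h11
        linarith
      · have hdom : Dominates M ρ mu (sroot s) :=
          star hρ hmu.1.1 hmu.1.2 h10
        exact hμαs (hmu.2 (sroot s) (isPosRoot_sroot hρ s) hdom).symm
    · -- the general case: transport dominance of α_s by sλ
      obtain ⟨hdom_sl, hne_sl⟩ := nonminimal_dom hρ hlam s h1 h2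
      set W := M.toCoxeterSystem.wordProd ω with hW
      set ξ := ρ (σ s) (-(ρ W (sroot s))) with hξ
      have hηroot : IsRoot M ρ (ρ W (sroot s)) := root_rho (isRoot_sroot s) _
      have hξpos : IsPos ξ := by
        apply flip' hρ (root_neg hρ hηroot) (isNeg_neg_isPos hc2)
        intro h
        apply hη
        rw [← neg_neg (ρ W (sroot s)), h]
      have hξroot : IsRoot M ρ ξ := root_rho (root_neg hρ hηroot) _
      -- equivariance
      have htrans : Dominates M ρ (ρ (σ s) mu) ξ := by
        have h12 := dom_equivariant (ρ := ρ) hdom_sl (σ s * W * σ s)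
        have h13 : ρ (σ s * W * σ s) (ρ (σ s) lam) = ρ (σ s) mu := by
          rw [← rho_mul_apply]
          have hass : σ s * W * σ s * σ s = σ s * W := by
            rw [mul_assoc (σ s * W) (σ s) (σ s), sigma_sq, mul_one]
          rw [hass, rho_mul_apply, ← hw_eq]
        have h14 : ρ (σ s * W * σ s) (sroot s) = ξ := by
          rw [rho_mul_apply, rho_simple_sroot hρ, rho_neg, rho_mul_apply, hξ, rho_neg]
        rwa [h13, h14] at h12
      have hneξ : ξ ≠ ρ (σ s) mu := by
        intro h
        have h15 : -(ρ W (sroot s)) = mu := rho_inj (u := σ s) h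
        have h16 : ρ W (-(sroot s)) = ρ W lam := by
          rw [rho_neg, h15]
          exact hw_eq
        have h17 : -(sroot s) = lam := rho_inj h16
        have h18 := hlam.1.2 s
        rw [← h17] at h18
        simp only [Pi.neg_apply] at h18
        rw [sroot_coord_self hρ] at h18
        linarith
      refine ⟨⟨hsμroot, hsμpos⟩, ?_⟩
      intro hmin
      exact hneξ (hmin.2 ξ ⟨hξroot, hξpos⟩ htrans)
  · -- ρ w α_s = α_s
    have h19 := form_rho hρ (M.toCoxeterSystem.wordProd ω) lam (sroot s)
    rw [hc3, hμω] at h19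
    exact conclude hρ hmu hsμpos (by linarith)

end Stmt8

theorem statement8 [DecidableEq B] [Fintype B] (M : CoxeterMatrix B)
    (ρ : M.Group →* Module.End ℝ (B → ℝ))
    (hρ : ∀ (s : B) (v : B → ℝ),
      ρ (M.simple s) v = v - (2 * form M v (sroot s)) • sroot s)
    (lam mu : B → ℝ) (hlam : IsMinimal M ρ lam) (hmu : IsMinimal M ρ mu)
    (hle : PLE M ρ lam mu) (s : B)
    (h1 : IsPosRoot M ρ (ρ (M.simple s) lam))
    (h2 : ¬ IsMinimal M ρ (ρ (M.simple s) lam)) :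
    IsPosRoot M ρ (ρ (M.simple s) mu) ∧
      ¬ IsMinimal M ρ (ρ (M.simple s) mu) :=
  Stmt8.main_statement hρ lam mu hlam hmu hle s h1 h2
end
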